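/- arXiv:2410.09617 — 5 statements merged into one kernel-verified Lean document; each statement's English description precedes it below -/
import Mathlib

section
/- For all positive integers m and k there exists n₀ such that the following holds for every n ≥ n₀: if a graph G contains the complete k-partite graph with all k parts of size n as a (not necessarily induced) subgraph, then G contains K_m as a subgraph or G contains the complete k-partite graph with all k parts of size m as an induced subgraph. -/
open SimpleGraph

/-- A family of finite graphs, given for each `n` as a predicate on graphs on `Fin n`. -/
abbrev GraphFamily := ∀ n : ℕ, SimpleGraph (Fin n) → Prop

/-- `G` contains a copy of `F` as a (not necessarily induced) subgraph:
there is an injective map of vertices sending edges to edges. -/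
def ContainsCopy {α β : Type} (G : SimpleGraph α) (F : SimpleGraph β) : Prop :=
  ∃ f : β → α, Function.Injective f ∧ ∀ ⦃u v⦄, F.Adj u v → G.Adj (f u) (f v)

/-- Membership of a graph on an arbitrary vertex type in a family, up to isomorphism. -/
def MemFam (𝓐 : GraphFamily) {β : Type} (G : SimpleGraph β) : Prop :=
  ∃ (n : ℕ) (H : SimpleGraph (Fin n)), Nonempty (G ≃g H) ∧ 𝓐 n H

/-- The family is closed under isomorphism. -/
def IsoClosed (𝓐 : GraphFamily) : Prop :=
  ∀ (n : ℕ) (G G' : SimpleGraph (Fin n)), Nonempty (G ≃g G') → 𝓐 n G → 𝓐 n G'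

/-- The complete multipartite graph with part sizes `m 0, …, m (r-1)`. -/
def completeMultipartite {r : ℕ} (m : Fin r → ℕ) : SimpleGraph (Σ i, Fin (m i)) :=
  completeMultipartiteGraph (fun i => Fin (m i))

/-- `(𝓐, 𝓐ᶜ)` is a suitable partition, witnessed by the integer `k ≥ 2`: for all
sufficiently large `n`, every complete `(k-1)`-partite graph with all parts of size
at least `n` belongs to `𝓐`, and no graph in `𝓐` contains the Turán graph `T(n,k)`
as a subgraph. -/
def SuitableWith (𝓐 : GraphFamily) (k : ℕ) : Prop :=
  2 ≤ k ∧ ∃ N : ℕ, ∀ n, N ≤ n →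
    ((∀ m : Fin (k - 1) → ℕ, (∀ i, n ≤ m i) → MemFam 𝓐 (completeMultipartite m)) ∧
     ∀ (n' : ℕ) (G : SimpleGraph (Fin n')), 𝓐 n' G → ¬ ContainsCopy G (turanGraph n k))

/-- A partition `(𝓐, 𝓐ᶜ)` is suitable: either complete graphs are eventually in `𝓐`,
or some `k ≥ 2` witnesses suitability. -/
def Suitable (𝓐 : GraphFamily) : Prop :=
  (∃ N : ℕ, ∀ n, N ≤ n → 𝓐 n ⊤) ∨ ∃ k : ℕ, SuitableWith 𝓐 k

/-- Every complete `r`-partite graph with all parts sufficiently large is in `𝓐`. -/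
def AllBigMultipartiteIn (𝓐 : GraphFamily) (r : ℕ) : Prop :=
  ∃ N : ℕ, ∀ m : Fin r → ℕ, (∀ i, N ≤ m i) → MemFam 𝓐 (completeMultipartite m)

/-- The partition `(𝓐, 𝓐ᶜ)` has (finite) abstract chromatic number `k`: complete graphs
are not eventually in `𝓐`, and `k` is the largest integer such that every complete
`(k-1)`-partite graph with all parts sufficiently large is in `𝓐`. -/
def HasAbsChromNum (𝓐 : GraphFamily) (k : ℕ) : Prop :=
  (¬ ∃ N : ℕ, ∀ n, N ≤ n → 𝓐 n ⊤) ∧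
  AllBigMultipartiteIn 𝓐 (k - 1) ∧
  ∀ j : ℕ, k ≤ j → ¬ AllBigMultipartiteIn 𝓐 j

/-- A graph parameter: a real value for every finite graph. -/
abbrev GraphParam := ∀ n : ℕ, SimpleGraph (Fin n) → ℝ

/-- A graph parameter is isomorphism-invariant and nonnegative. -/
def IsGraphParam (h : GraphParam) : Prop :=
  (∀ (n : ℕ) (G G' : SimpleGraph (Fin n)), Nonempty (G ≃g G') → h n G = h n G') ∧
  ∀ (n : ℕ) (G : SimpleGraph (Fin n)), 0 ≤ h n G

/-- `g(n, F)`: the maximum of `h` over `F`-free graphs on `n` vertices. -/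
noncomputable def exRel (h : GraphParam) (n : ℕ) {β : Type} (F : SimpleGraph β) : ℝ :=
  sSup {x : ℝ | ∃ G : SimpleGraph (Fin n), ¬ ContainsCopy G F ∧ h n G = x}

/-- `g(n, (𝓐, 𝓐ᶜ))`: the maximum of `h` over `n`-vertex graphs in `𝓐`. -/
noncomputable def exFam (h : GraphParam) (𝓐 : GraphFamily) (n : ℕ) : ℝ :=
  sSup {x : ℝ | ∃ G : SimpleGraph (Fin n), 𝓐 n G ∧ h n G = x}

/-- `G` is a complete `r`-partite graph (some parts possibly empty). -/
def IsCompMultipartite {n : ℕ} (G : SimpleGraph (Fin n)) (r : ℕ) : Prop :=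
  ∃ m : Fin r → ℕ, Nonempty (G ≃g completeMultipartite m)

/-- `g_h` is weakly `k`-ESS. -/
def WeaklyESS (h : GraphParam) (k : ℕ) : Prop :=
  ∀ (nF : ℕ) (F : SimpleGraph (Fin nF)), F.chromaticNumber = (k : ℕ∞) →
    ∀ ε : ℝ, 0 < ε → ∃ N : ℕ, ∀ n, N ≤ n →
      ∃ T : SimpleGraph (Fin n), IsCompMultipartite T (k - 1) ∧
        (1 - ε) * h n T ≤ exRel h n F ∧ exRel h n F ≤ (1 + ε) * h n T

/-- `g_h` is strongly `k`-ESS. -/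
def StronglyESS (h : GraphParam) (k : ℕ) : Prop :=
  ∀ (nF : ℕ) (F : SimpleGraph (Fin nF)), F.chromaticNumber = (k : ℕ∞) →
    ∀ ε : ℝ, 0 < ε → ∃ N : ℕ, ∀ n, N ≤ n →
      (1 - ε) * h n (turanGraph n (k - 1)) ≤ exRel h n F ∧
        exRel h n F ≤ (1 + ε) * h n (turanGraph n (k - 1))

/-- The edit distance between two graphs on the same vertex set: the size of the
symmetric difference of the edge sets. -/
noncomputable def editDist {n : ℕ} (G T : SimpleGraph (Fin n)) : ℕ :=
  (symmDiff G.edgeSet T.edgeSet).ncard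

/-- `g_h` is weakly `k`-ESS-stable. -/
def WeaklyESSStable (h : GraphParam) (k : ℕ) : Prop :=
  WeaklyESS h k ∧
  ∀ (nF : ℕ) (F : SimpleGraph (Fin nF)), F.chromaticNumber = (k : ℕ∞) →
    ∀ ε : ℝ, 0 < ε → ∃ δ : ℝ, 0 < δ ∧ ∃ N : ℕ, ∀ n, N ≤ n →
      ∀ G : SimpleGraph (Fin n), ¬ ContainsCopy G F →
        (1 - δ) * exRel h n F ≤ h n G →
        ∃ T : SimpleGraph (Fin n), IsCompMultipartite T (k - 1) ∧
          (editDist G T : ℝ) ≤ ε * (n : ℝ) ^ 2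

/-- `g_h` is strongly `k`-ESS-stable. -/
def StronglyESSStable (h : GraphParam) (k : ℕ) : Prop :=
  StronglyESS h k ∧
  ∀ (nF : ℕ) (F : SimpleGraph (Fin nF)), F.chromaticNumber = (k : ℕ∞) →
    ∀ ε : ℝ, 0 < ε → ∃ δ : ℝ, 0 < δ ∧ ∃ N : ℕ, ∀ n, N ≤ n →
      ∀ G : SimpleGraph (Fin n), ¬ ContainsCopy G F →
        (1 - δ) * exRel h n F ≤ h n G →
        (editDist G (turanGraph n (k - 1)) : ℝ) ≤ ε * (n : ℝ) ^ 2

/-- `σ(F)`: the smallest size of a color class among all proper `k`-colorings of `F`. -/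
noncomputable def graphSigma {nF : ℕ} (F : SimpleGraph (Fin nF)) (k : ℕ) : ℕ :=
  sInf {t : ℕ | ∃ C : F.Coloring (Fin k), ∃ i : Fin k,
    (Finset.univ.filter fun v => C v = i).card = t}

/-- Part sizes obtained from `m` by adding `t` parts of size `1` (adding `t`
universal vertices to the complete multipartite graph with parts `m`). -/
def addUniversal (t : ℕ) {r : ℕ} (m : Fin r → ℕ) : Fin (t + r) → ℕ :=
  fun i => if h : (i : ℕ) < t then 1 else m ⟨(i : ℕ) - t, by have := i.isLt; omega⟩

/-- `T(n, r, t)`: the Turán graph `T(n - t, r)` together with `t` universal vertices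
(the vertices with value `< t`). -/
def turanPlus (n r t : ℕ) : SimpleGraph (Fin n) :=
  SimpleGraph.fromRel fun x y =>
    (x : ℕ) < t ∨ ((x : ℕ) - t) % r ≠ ((y : ℕ) - t) % r

/-- `T⁺(n, r)`: the Turán graph `T(n, r)` with one extra edge (between `r - 1` and
`2r - 1`) inside one of its smallest parts (the residue class of `r - 1`). -/
def turanPlusEdge (n r : ℕ) : SimpleGraph (Fin n) :=
  SimpleGraph.fromRel fun x y =>
    (x : ℕ) % r ≠ (y : ℕ) % r ∨ ((x : ℕ) = r - 1 ∧ (y : ℕ) = 2 * r - 1)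

/-- `σ(𝓐, 𝓐ᶜ)`: the smallest minimum part size (= σ) of a complete `k`-partite graph,
with all `k` parts nonempty, that is contained in no member of `𝓐`. -/
noncomputable def famSigma (𝓐 : GraphFamily) (k : ℕ) : ℕ :=
  sInf {t : ℕ | ∃ m : Fin k → ℕ, (∀ i, 1 ≤ m i) ∧ (∃ i, m i = t ∧ ∀ j, m i ≤ m j) ∧
    ∀ (n : ℕ) (G : SimpleGraph (Fin n)), 𝓐 n G → ¬ ContainsCopy G (completeMultipartite m)}

/-- `g_h` is weakly `k`-ESS-sigma. -/
def WeaklyESSSigma (h : GraphParam) (k : ℕ) : Prop :=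
  ∀ (nF : ℕ) (F : SimpleGraph (Fin nF)), F.chromaticNumber = (k : ℕ∞) →
    ∃ N : ℕ, ∀ n, N ≤ n → ∃ (m : Fin (k - 1) → ℕ) (T : SimpleGraph (Fin n)),
      Nonempty (T ≃g completeMultipartite (addUniversal (graphSigma F k - 1) m)) ∧
      exRel h n F = h n T

/-- `g_h` is strongly `k`-ESS-sigma. -/
def StronglyESSSigma (h : GraphParam) (k : ℕ) : Prop :=
  ∀ (nF : ℕ) (F : SimpleGraph (Fin nF)), F.chromaticNumber = (k : ℕ∞) →
    ∃ N : ℕ, ∀ n, N ≤ n →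
      exRel h n F = h n (turanPlus n (k - 1) (graphSigma F k - 1))

/-- The number of copies of `F` in `G`: subgraphs of `G` isomorphic to `F`. -/
noncomputable def copyCount {n : ℕ} {β : Type} (G : SimpleGraph (Fin n))
    (F : SimpleGraph β) : ℕ :=
  Nat.card {H : G.Subgraph // Nonempty (F ≃g H.coe)}

/-- `g_h` is `k`-ESS-supersat. -/
def ESSSupersat (h : GraphParam) (k : ℕ) : Prop :=
  ∀ (nF : ℕ) (F : SimpleGraph (Fin nF)), F.chromaticNumber = (k : ℕ∞) →
    ∀ ε : ℝ, 0 < ε → ∃ δ : ℝ, 0 < δ ∧ ∃ N : ℕ, ∀ n, N ≤ n →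
      ∀ G : SimpleGraph (Fin n), (1 + ε) * exRel h n F < h n G →
        δ * (n : ℝ) ^ nF ≤ (_root_.copyCount G F : ℝ)

/-- A proper edge-coloring of `G`, given as a symmetric function of the two endpoints:
edges sharing a vertex receive distinct colors. -/
def ProperEdgeColoring {α C : Type} (G : SimpleGraph α) (c : α → α → C) : Prop :=
  (∀ u v, c u v = c v u) ∧
  ∀ u v w, G.Adj u v → G.Adj u w → v ≠ w → c u v ≠ c u w

/-- The edge-colored graph `(G, c)` contains a rainbow copy of `F`. -/
def HasRainbowCopy {α β C : Type} (G : SimpleGraph α) (c : α → α → C)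
    (F : SimpleGraph β) : Prop :=
  ∃ f : β → α, Function.Injective f ∧ (∀ ⦃u v⦄, F.Adj u v → G.Adj (f u) (f v)) ∧
    ∀ u v u' v', F.Adj u v → F.Adj u' v' → s(u, v) ≠ s(u', v') →
      c (f u) (f v) ≠ c (f u') (f v')

/-- The family `𝓐` is hereditary: closed under taking induced subgraphs
(equivalently, under induced-subgraph embeddings). -/
def Hereditary (𝓐 : GraphFamily) : Prop :=
  ∀ (n n' : ℕ) (G : SimpleGraph (Fin n)) (G' : SimpleGraph (Fin n')),
    𝓐 n G → Nonempty (G' ↪g G) → 𝓐 n' G'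

/-- The family `𝓐` is monotone: closed under taking subgraphs. -/
def MonotoneFam (𝓐 : GraphFamily) : Prop :=
  ∀ (n n' : ℕ) (G : SimpleGraph (Fin n)) (G' : SimpleGraph (Fin n')),
    𝓐 n G → ContainsCopy G G' → 𝓐 n' G'

/-- `(𝓐, 𝓐ᶜ)` is an edge-critical partition with abstract chromatic number `k`. -/
def EdgeCritical (𝓐 : GraphFamily) (k : ℕ) : Prop :=
  Suitable 𝓐 ∧ HasAbsChromNum 𝓐 k ∧
  ∃ N : ℕ, ∀ n, N ≤ n → ∀ (n' : ℕ) (G : SimpleGraph (Fin n')), 𝓐 n' G →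
    ¬ ContainsCopy G (turanPlusEdge n (k - 1))

/-- The graph obtained from `G` by adding a new vertex (namely `none`) joined to all
neighbors of the vertex `v`. -/
def duplicateVertex {n : ℕ} (G : SimpleGraph (Fin n)) (v : Fin n) :
    SimpleGraph (Option (Fin n)) :=
  SimpleGraph.fromRel fun x y =>
    match x, y with
    | some a, some b => G.Adj a b
    | none, some b => G.Adj v b
    | _, _ => False

/-- The graph parameter `h` is balanced for `k`. -/
def BalancedParam (h : GraphParam) (k : ℕ) : Prop :=
  ∃ a : ℝ, 0 < a ∧
    (∃ C : ℝ, 0 < C ∧ ∀ (n : ℕ) (G : SimpleGraph (Fin n)) (u v : Fin n),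
      u ≠ v → ¬ G.Adj u v →
      |h n (G ⊔ SimpleGraph.fromEdgeSet {s(u, v)}) - h n G| ≤ C * (n : ℝ) ^ a) ∧
    (∃ C : ℝ, 0 < C ∧ ∀ (n : ℕ) (G : SimpleGraph (Fin n)) (v : Fin n)
        (G'' : SimpleGraph (Fin (n + 1))), Nonempty (G'' ≃g duplicateVertex G v) →
      |h (n + 1) G'' - h n G| ≤ C * (n : ℝ) ^ (a + 1)) ∧
    (∀ c : ℝ, 0 < c → ∃ (n₀ : ℕ) (c₁ c₂ : ℝ), 0 < c₁ ∧ 0 < c₂ ∧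
      ∀ n, n₀ ≤ n → ∀ m : Fin (k - 1) → ℕ, (∀ i, c * (n : ℝ) ≤ (m i : ℝ)) →
        ∀ G : SimpleGraph (Fin n), Nonempty (G ≃g completeMultipartite m) →
          ((∀ u v : Fin n, u ≠ v → ¬ G.Adj u v →
              c₁ * (n : ℝ) ^ a ≤ h n (G ⊔ SimpleGraph.fromEdgeSet {s(u, v)}) - h n G ∧
              h n (G ⊔ SimpleGraph.fromEdgeSet {s(u, v)}) - h n G ≤ c₂ * (n : ℝ) ^ a) ∧
           (∀ (v : Fin n) (G'' : SimpleGraph (Fin (n + 1))),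
              Nonempty (G'' ≃g duplicateVertex G v) →
              c₁ * (n : ℝ) ^ (a + 1) ≤ h (n + 1) G'' - h n G ∧
              h (n + 1) G'' - h n G ≤ c₂ * (n : ℝ) ^ (a + 1)))) ∧
    (∀ c : ℝ, 0 < c → ∃ (n₀ : ℕ) (c₁ c₂ : ℝ), 0 < c₁ ∧ 0 < c₂ ∧
      ∀ n, n₀ ≤ n → ∀ m : Fin (k - 1) → ℕ, (∀ i, c * (n : ℝ) ≤ (m i : ℝ)) →
        ∀ G : SimpleGraph (Fin n), Nonempty (G ≃g completeMultipartite m) →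
          ∀ G''' : SimpleGraph (Fin n), G''' ≤ G →
            c₁ * ((G.edgeSet.ncard - G'''.edgeSet.ncard : ℕ) : ℝ) * (n : ℝ) ^ a ≤
              h n G - h n G''' ∧
            h n G - h n G''' ≤
              c₂ * ((G.edgeSet.ncard - G'''.edgeSet.ncard : ℕ) : ℝ) * (n : ℝ) ^ a)
/-- Two-color Ramsey: auxiliary lemma. -/
private lemma ramsey_aux (s t : ℕ) : ∃ N : ℕ, ∀ (α : Type) (G : SimpleGraph α) (S : Finset α),
    N ≤ S.card →
    (∃ T : Finset α, T ⊆ S ∧ T.card = s ∧ ∀ a ∈ T, ∀ b ∈ T, a ≠ b → G.Adj a b) ∨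
    (∃ T : Finset α, T ⊆ S ∧ T.card = t ∧ ∀ a ∈ T, ∀ b ∈ T, a ≠ b → ¬ G.Adj a b) := by
  induction s generalizing t with
  | zero => exact ⟨0, fun α G S _ => Or.inl ⟨∅, by simp⟩⟩
  | succ s ihs =>
    induction t with
    | zero => exact ⟨0, fun α G S _ => Or.inr ⟨∅, by simp⟩⟩
    | succ t iht =>
      obtain ⟨N₁, h₁⟩ := ihs (t + 1)
      obtain ⟨N₂, h₂⟩ := iht
      refine ⟨N₁ + N₂ + 1, fun α G S hS => ?_⟩
      classical
      obtain ⟨v, hv⟩ : S.Nonempty := Finset.card_pos.mp (by omega)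
      set A := (S.erase v).filter (fun u => G.Adj v u) with hAdef
      set B := (S.erase v).filter (fun u => ¬ G.Adj v u) with hBdef
      have hAB : A.card + B.card = (S.erase v).card :=
        Finset.card_filter_add_card_filter_not _
      have hec : (S.erase v).card = S.card - 1 := Finset.card_erase_of_mem hv
      have hsubA : A ⊆ S := fun x hx =>
        Finset.mem_of_mem_erase (Finset.mem_of_mem_filter _ hx)
      have hsubB : B ⊆ S := fun x hx =>
        Finset.mem_of_mem_erase (Finset.mem_of_mem_filter _ hx)
      rcases (by omega : N₁ ≤ A.card ∨ N₂ ≤ B.card) with hAc | hBc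
      · rcases h₁ α G A hAc with ⟨T, hTA, hTc, hT⟩ | ⟨T, hTA, hTc, hT⟩
        · left
          have hvT : v ∉ T := fun h =>
            (Finset.mem_erase.mp (Finset.mem_of_mem_filter _ (hTA h))).1 rfl
          refine ⟨insert v T, ?_, ?_, ?_⟩
          · intro x hx
            rcases Finset.mem_insert.mp hx with rfl | hx
            · exact hv
            · exact hsubA (hTA hx)
          · rw [Finset.card_insert_of_notMem hvT, hTc]
          · intro a ha b hb hab
            rw [Finset.mem_insert] at ha hb
            rcases ha with rfl | ha
            · rcases hb with rfl | hb
              · exact absurd rfl hab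
              · exact (Finset.mem_filter.mp (hTA hb)).2
            · rcases hb with rfl | hb
              · exact ((Finset.mem_filter.mp (hTA ha)).2).symm
              · exact hT a ha b hb hab
        · exact Or.inr ⟨T, fun x hx => hsubA (hTA hx), hTc, hT⟩
      · rcases h₂ α G B hBc with ⟨T, hTA, hTc, hT⟩ | ⟨T, hTA, hTc, hT⟩
        · exact Or.inl ⟨T, fun x hx => hsubB (hTA hx), hTc, hT⟩
        · right
          have hvT : v ∉ T := fun h =>
            (Finset.mem_erase.mp (Finset.mem_of_mem_filter _ (hTA h))).1 rfl
          refine ⟨insert v T, ?_, ?_, ?_⟩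
          · intro x hx
            rcases Finset.mem_insert.mp hx with rfl | hx
            · exact hv
            · exact hsubB (hTA hx)
          · rw [Finset.card_insert_of_notMem hvT, hTc]
          · intro a ha b hb hab
            rw [Finset.mem_insert] at ha hb
            rcases ha with rfl | ha
            · rcases hb with rfl | hb
              · exact absurd rfl hab
              · exact (Finset.mem_filter.mp (hTA hb)).2
            · rcases hb with rfl | hb
              · exact fun h => (Finset.mem_filter.mp (hTA ha)).2 h.symm
              · exact hT a ha b hb hab

/-- For all positive `m`, `k` there is `n₀` such that for all `n ≥ n₀`:
any graph containing the complete `k`-partite graph with all parts of size `n` as a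
subgraph contains `K_m` as a subgraph, or the complete `k`-partite graph with all
parts of size `m` as an induced subgraph. -/
theorem multipartite_ramsey (m k : ℕ) (hm : 0 < m) (hk : 0 < k) :
    ∃ n₀ : ℕ, ∀ n, n₀ ≤ n → ∀ (α : Type) [Fintype α] (G : SimpleGraph α),
      ContainsCopy G (completeMultipartite fun _ : Fin k => n) →
      ContainsCopy G (⊤ : SimpleGraph (Fin m)) ∨
        Nonempty (completeMultipartite (fun _ : Fin k => m) ↪g G) := by
  classical
  obtain ⟨N, hN⟩ := ramsey_aux m m
  refine ⟨N, fun n hn α _ G hG => ?_⟩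
  obtain ⟨f, hfinj, hfe⟩ := hG
  have hadjn : ∀ (x y : Σ _ : Fin k, Fin n), x.1 ≠ y.1 → G.Adj (f x) (f y) := by
    intro x y hxy
    exact hfe (by simpa [completeMultipartite] using hxy)
  have hpart : ∀ i : Fin k, Function.Injective (fun u : Fin n => f ⟨i, u⟩) := by
    intro i a b h
    exact eq_of_heq (Sigma.mk.inj_iff.mp (hfinj h)).2
  by_cases hcl : ∃ i : Fin k, ∃ T : Finset α,
      T ⊆ Finset.image (fun u : Fin n => f ⟨i, u⟩) Finset.univ ∧ T.card = m ∧
      ∀ a ∈ T, ∀ b ∈ T, a ≠ b → G.Adj a b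
  · left
    obtain ⟨i, T, _, hTc, hT⟩ := hcl
    refine ⟨fun j => ((T.equivFinOfCardEq hTc).symm j : α), ?_, ?_⟩
    · intro a b h
      exact (T.equivFinOfCardEq hTc).symm.injective (Subtype.ext h)
    · intro u v huv
      have huv' : u ≠ v := by simpa using huv
      exact hT _ ((T.equivFinOfCardEq hTc).symm u).2 _ ((T.equivFinOfCardEq hTc).symm v).2
        (fun h => huv' ((T.equivFinOfCardEq hTc).symm.injective (Subtype.ext h)))
  · right
    have hind : ∀ i : Fin k, ∃ T : Finset α,
        T ⊆ Finset.image (fun u : Fin n => f ⟨i, u⟩) Finset.univ ∧ T.card = m ∧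
        ∀ a ∈ T, ∀ b ∈ T, a ≠ b → ¬ G.Adj a b := by
      intro i
      have hcard : N ≤ (Finset.image (fun u : Fin n => f ⟨i, u⟩) Finset.univ).card := by
        rw [Finset.card_image_of_injective _ (hpart i), Finset.card_univ, Fintype.card_fin]
        exact hn
      rcases hN α G _ hcard with ⟨T, hT1, hT2, hT3⟩ | hT
      · exact (hcl ⟨i, T, hT1, hT2, hT3⟩).elim
      · exact hT
    choose T hTsub hTc hT using hind
    set e : ∀ i : Fin k, Fin m → α :=
      fun i j => (((T i).equivFinOfCardEq (hTc i)).symm j : α) with he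
    have heinj : ∀ i, Function.Injective (e i) := fun i a b h =>
      ((T i).equivFinOfCardEq (hTc i)).symm.injective (Subtype.ext h)
    have hmem : ∀ i j, e i j ∈ T i := fun i j =>
      (((T i).equivFinOfCardEq (hTc i)).symm j).2
    have hpre : ∀ (i : Fin k) (j : Fin m), ∃ w : Fin n, f ⟨i, w⟩ = e i j := by
      intro i j
      obtain ⟨u, _, hu⟩ := Finset.mem_image.mp (hTsub i (hmem i j))
      exact ⟨u, hu⟩
    choose w hw using hpre
    set φ : (Σ _ : Fin k, Fin m) → α := fun x => f ⟨x.1, w x.1 x.2⟩ with hφ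
    have hφe : ∀ x : Σ _ : Fin k, Fin m, φ x = e x.1 x.2 := fun x => hw x.1 x.2
    have hφinj : Function.Injective φ := by
      rintro ⟨i, u⟩ ⟨j, v⟩ h
      have h2 := hfinj h
      obtain ⟨rfl, -⟩ := Sigma.mk.inj_iff.mp h2
      have h3 : e i u = e i v := by
        rw [← hw i u, ← hw i v]; exact h
      rw [heinj i h3]
    have hiff : ∀ x y : Σ _ : Fin k, Fin m,
        G.Adj (φ x) (φ y) ↔ (completeMultipartite fun _ : Fin k => m).Adj x y := by
      intro x y
      constructor
      · intro hadj
        simp only [completeMultipartite, comap_adj, top_adj]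
        by_contra hxy
        obtain ⟨i, u⟩ := x
        obtain ⟨j, v⟩ := y
        obtain rfl : i = j := by simpa using hxy
        rw [hφe ⟨i, u⟩, hφe ⟨i, v⟩] at hadj
        rcases eq_or_ne u v with rfl | huv
        · exact G.irrefl hadj
        · exact hT i _ (hmem i u) _ (hmem i v) (fun h => huv (heinj i h)) hadj
      · intro hadj
        have hxy : x.1 ≠ y.1 := by
          simpa [completeMultipartite] using hadj
        exact hadjn _ _ hxy
    exact ⟨⟨⟨φ, hφinj⟩, fun {x y} => hiff x y⟩⟩
end

section
/- Let k ≥ 2 be an integer, let h be a graph parameter and suppose the Turán-type function g = g_h is strongly k-ESS. Then g is strongly k-ESS with respect to every suitable partition with abstract chromatic number k: for every suitable partition (𝓐,𝓕) of the class of all finite graphs with abstract chromatic number k and every ε > 0, there exists N such that for every n ≥ N we have (1−ε)·h(T(n,k−1)) ≤ g(n,(𝓐,𝓕)) ≤ (1+ε)·h(T(n,k−1)). -/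
open SimpleGraph

section MyAux

lemma myContainsCopy_of_iso {α β γ : Type} {G : SimpleGraph α} {H : SimpleGraph β}
    {F : SimpleGraph γ} (e : G ≃g H) (hc : ContainsCopy G F) : ContainsCopy H F := by
  obtain ⟨f, hfi, hfa⟩ := hc
  exact ⟨fun v => e (f v), (e.toEquiv.injective.comp hfi), fun u v huv => e.map_adj_iff.2 (hfa huv)⟩

lemma myContainsCopy_CM_turan {r k' M : ℕ} (hk' : 0 < k') (hkr : k' ≤ r)
    (m : Fin r → ℕ) (hm : ∀ i, M ≤ m i) :
    ContainsCopy (completeMultipartite m) (turanGraph M k') := by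
  refine ⟨fun v => ⟨⟨(v : ℕ) % k', lt_of_lt_of_le (Nat.mod_lt _ hk') hkr⟩,
    ⟨(v : ℕ) / k', lt_of_lt_of_le (lt_of_le_of_lt (Nat.div_le_self _ _) v.2) (hm _)⟩⟩, ?_, ?_⟩
  · intro u v huv
    have h2 := congrArg (fun x : Σ i : Fin r, Fin (m i) => ((x.2 : ℕ) * k' + (x.1 : ℕ))) huv
    simp only at h2
    rw [Nat.div_add_mod', Nat.div_add_mod'] at h2
    exact Fin.ext h2
  · intro u v huv
    have huv' : (u : ℕ) % k' ≠ (v : ℕ) % k' := huv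
    simp only [completeMultipartite, comap_adj, top_adj]
    intro hctr
    exact huv' (congrArg (fun x : Fin r => (x : ℕ)) hctr)

private def myG {r : ℕ} (m : Fin r → ℕ) (n : ℕ)
    (hlt : ∀ (j : ℕ) (i : Fin r), j < m i → j * r + (i : ℕ) < n) :
    (Σ i, Fin (m i)) → Fin n :=
  fun x => ⟨(x.2 : ℕ) * r + (x.1 : ℕ), hlt _ _ x.2.2⟩

lemma myTuranIso (n r : ℕ) (hr : 0 < r) (hrn : r ≤ n) :
    ∃ m : Fin r → ℕ, (∀ i, (n - r) / r ≤ m i) ∧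
      Nonempty (turanGraph n r ≃g completeMultipartite m) := by
  set m : Fin r → ℕ := fun i => (n - 1 - (i : ℕ)) / r + 1 with hm
  have hmod : ∀ (j : ℕ) (i : Fin r), j < m i → j * r + (i : ℕ) < n := by
    intro j i hj
    have h3 : j * r ≤ n - 1 - (i : ℕ) :=
      le_trans (Nat.mul_le_mul_right r (Nat.lt_succ_iff.mp hj)) (Nat.div_mul_le_self _ _)
    have h4 := i.2
    set t := j * r
    omega
  set g := myG m n hmod with hg
  have hgmod : ∀ x : Σ i, Fin (m i), ((g x : ℕ)) % r = (x.1 : ℕ) := by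
    intro x
    show ((x.2 : ℕ) * r + (x.1 : ℕ)) % r = (x.1 : ℕ)
    rw [Nat.add_comm, Nat.add_mul_mod_self_right, Nat.mod_eq_of_lt x.1.2]
  have hgdiv : ∀ x : Σ i, Fin (m i), ((g x : ℕ)) / r = (x.2 : ℕ) := by
    intro x
    show ((x.2 : ℕ) * r + (x.1 : ℕ)) / r = (x.2 : ℕ)
    rw [Nat.add_comm, Nat.add_mul_div_right _ _ hr, Nat.div_eq_of_lt x.1.2, Nat.zero_add]
  have hginj : Function.Injective g := by
    rintro ⟨i, j⟩ ⟨i', j'⟩ hgg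
    have hvals : ((g ⟨i, j⟩ : ℕ)) = (g ⟨i', j'⟩ : ℕ) := congrArg Fin.val hgg
    have h1 : (i : ℕ) = (i' : ℕ) := by
      rw [← hgmod ⟨i, j⟩, ← hgmod ⟨i', j'⟩, hvals]
    have h1' : i = i' := Fin.ext h1
    subst h1'
    have h2 : (j : ℕ) = (j' : ℕ) := by
      rw [← hgdiv ⟨i, j⟩, ← hgdiv ⟨i, j'⟩, hvals]
    exact congrArg (Sigma.mk i) (Fin.ext h2)
  have hgsurj : Function.Surjective g := by
    intro v
    have hvd : (v : ℕ) / r < m ⟨(v : ℕ) % r, Nat.mod_lt _ hr⟩ := by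
      have e0 : (v : ℕ) = r * ((v : ℕ) / r) + (v : ℕ) % r := (Nat.div_add_mod _ _).symm
      have e1 : (v : ℕ) - (v : ℕ) % r = r * ((v : ℕ) / r) := Nat.sub_eq_of_eq_add e0
      have e2 : ((v : ℕ) - (v : ℕ) % r) / r = (v : ℕ) / r := by
        rw [e1, Nat.mul_div_cancel_left _ hr]
      have e3 : (v : ℕ) - (v : ℕ) % r ≤ n - 1 - ((v : ℕ) % r) := by
        have := v.2; omega
      have e4 : (v : ℕ) / r ≤ (n - 1 - ((v : ℕ) % r)) / r := by
        rw [← e2]; exact Nat.div_le_div_right e3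
      exact Nat.lt_succ_of_le e4
    refine ⟨⟨⟨(v : ℕ) % r, Nat.mod_lt _ hr⟩, ⟨(v : ℕ) / r, hvd⟩⟩, ?_⟩
    apply Fin.ext
    show (v : ℕ) / r * r + (v : ℕ) % r = (v : ℕ)
    exact Nat.div_add_mod' _ _
  refine ⟨m, ?_, ⟨?_⟩⟩
  · intro i
    have : n - r ≤ n - 1 - (i : ℕ) := by have := i.2; omega
    exact le_trans (Nat.div_le_div_right this) (Nat.le_succ _)
  · refine (RelIso.mk (Equiv.ofBijective g ⟨hginj, hgsurj⟩) ?_).symm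
    intro x y
    show (turanGraph n r).Adj (g x) (g y) ↔ (completeMultipartite m).Adj x y
    have hiff : (turanGraph n r).Adj (g x) (g y) ↔ ((g x : ℕ)) % r ≠ ((g y : ℕ)) % r := Iff.rfl
    rw [hiff, hgmod, hgmod]
    simp only [completeMultipartite, comap_adj, top_adj]
    constructor
    · intro hne hctr; exact hne (congrArg (fun z : Fin r => (z : ℕ)) hctr)
    · intro hne hctr; exact hne (Fin.ext hctr)

lemma myTuranChrom (M k : ℕ) (hk : 0 < k) (hkM : k ≤ M) :
    (turanGraph M k).chromaticNumber = (k : ℕ∞) := by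
  apply le_antisymm
  · have hcol : (turanGraph M k).Colorable k :=
      ⟨SimpleGraph.Coloring.mk (fun v => ⟨(v : ℕ) % k, Nat.mod_lt _ hk⟩)
        (fun {v w} hadj hctr => hadj (congrArg (fun z : Fin k => (z : ℕ)) hctr))⟩
    exact hcol.chromaticNumber_le
  · have emb : (⊤ : SimpleGraph (Fin k)) ↪g turanGraph M k := by
      refine ⟨⟨fun i => ⟨(i : ℕ), lt_of_lt_of_le i.2 hkM⟩, ?_⟩, ?_⟩
      · intro a b hab
        have h0 := congrArg Fin.val hab
        exact Fin.ext h0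
      · intro a b
        show ((a : ℕ) % k ≠ (b : ℕ) % k) ↔ _
        rw [Nat.mod_eq_of_lt a.2, Nat.mod_eq_of_lt b.2, top_adj]
        exact ⟨fun hne hctr => hne (congrArg Fin.val hctr), fun hne hctr => hne (Fin.ext hctr)⟩
    have hle := SimpleGraph.chromaticNumber_mono_of_hom emb.toHom
    rwa [SimpleGraph.chromaticNumber_top, Fintype.card_fin] at hle

lemma mySetFinite (n : ℕ) (P : SimpleGraph (Fin n) → Prop) (h : GraphParam) :
    {x : ℝ | ∃ G : SimpleGraph (Fin n), P G ∧ h n G = x}.Finite := by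
  classical
  have heq : {x : ℝ | ∃ G : SimpleGraph (Fin n), P G ∧ h n G = x}
      = (fun G => h n G) '' {G | P G} := by
    ext x; simp [Set.mem_image]
  rw [heq]
  exact (Set.toFinite _).image _

end MyAux

/-- If `g_h` is strongly `k`-ESS, then `g_h` is strongly `k`-ESS with
respect to every suitable partition with abstract chromatic number `k`. -/
theorem stronglyESS_of_partition (k : ℕ) (hk : 2 ≤ k) (h : GraphParam)
    (hparam : IsGraphParam h) (hESS : StronglyESS h k)
    (𝓐 : GraphFamily) (hiso : IsoClosed 𝓐) (hsuit : Suitable 𝓐)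
    (habs : HasAbsChromNum 𝓐 k) :
    ∀ ε : ℝ, 0 < ε → ∃ N : ℕ, ∀ n, N ≤ n →
      (1 - ε) * h n (turanGraph n (k - 1)) ≤ exFam h 𝓐 n ∧
        exFam h 𝓐 n ≤ (1 + ε) * h n (turanGraph n (k - 1)) := by
  intro ε hε
  obtain ⟨hnotall, ⟨N₀, hN₀⟩, hmax⟩ := habs
  obtain htop | ⟨k', ⟨hk'2, N₁, hN₁⟩⟩ := hsuit
  · exact absurd htop hnotall
  -- k' = k
  have hk'le : k' - 1 < k := by
    by_contra hcon
    exact hmax (k' - 1) (by omega) ⟨N₁, fun m hm => (hN₁ N₁ le_rfl).1 m hm⟩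
  have hkk' : k' = k := by
    by_contra hne
    have hk'lt : k' ≤ k - 1 := by omega
    set B := max N₀ N₁ with hB
    obtain ⟨n', H, ⟨isoH⟩, hAH⟩ :=
      hN₀ (fun _ : Fin (k - 1) => B) (fun i => le_max_left _ _)
    have hcc : ContainsCopy H (turanGraph N₁ k') :=
      myContainsCopy_of_iso isoH
        (myContainsCopy_CM_turan (by omega) hk'lt _ (fun i => le_max_right _ _))
    exact (hN₁ N₁ le_rfl).2 n' H hAH hcc
  subst hkk'
  -- apply strong ESS to F := turanGraph M k'
  set M := max N₁ k' with hM
  have hch : (turanGraph M k').chromaticNumber = (k' : ℕ∞) :=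
    myTuranChrom M k' (by omega) (le_max_right _ _)
  obtain ⟨N₂, hN₂⟩ := hESS M (turanGraph M k') hch ε hε
  refine ⟨max N₂ ((N₀ + 2) * (k' - 1)), fun n hn => ?_⟩
  have hn₂ : N₂ ≤ n := le_trans (le_max_left _ _) hn
  have hnk : (N₀ + 2) * (k' - 1) ≤ n := le_trans (le_max_right _ _) hn
  have hr : 0 < k' - 1 := by omega
  have hrn : k' - 1 ≤ n := by
    calc k' - 1 = 1 * (k' - 1) := (Nat.one_mul _).symm
    _ ≤ (N₀ + 2) * (k' - 1) := Nat.mul_le_mul_right _ (by omega)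
    _ ≤ n := hnk
  have hdiv : N₀ ≤ (n - (k' - 1)) / (k' - 1) := by
    rw [Nat.le_div_iff_mul_le hr]
    have h5 : (N₀ + 1) * (k' - 1) ≤ n - (k' - 1) := by
      have h6 : (N₀ + 1) * (k' - 1) + (k' - 1) = (N₀ + 2) * (k' - 1) := by ring
      omega
    calc N₀ * (k' - 1) ≤ (N₀ + 1) * (k' - 1) := Nat.mul_le_mul_right _ (by omega)
    _ ≤ n - (k' - 1) := h5
  obtain ⟨m, hmge, ⟨isoT⟩⟩ := myTuranIso n (k' - 1) hr hrn
  obtain ⟨n', H, ⟨isoH⟩, hAH⟩ := hN₀ m (fun i => le_trans hdiv (hmge i))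
  have isoTH := isoT.trans isoH
  have hcard : n = n' := by
    have := Fintype.card_congr isoTH.toEquiv
    simpa using this
  subst hcard
  have hEq : h n (turanGraph n (k' - 1)) = h n H := hparam.1 n _ H ⟨isoTH⟩
  have hbdd1 := (mySetFinite n (fun G => 𝓐 n G) h).bddAbove
  have hbdd2 := (mySetFinite n (fun G => ¬ ContainsCopy G (turanGraph M k')) h).bddAbove
  have hlow : h n H ≤ exFam h 𝓐 n := le_csSup hbdd1 ⟨H, hAH, rfl⟩
  have hESSbounds := hN₂ n hn₂
  constructor
  · have h0 := hparam.2 n (turanGraph n (k' - 1))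
    nlinarith [hlow, hEq]
  · apply Real.sSup_le
    · rintro x ⟨G, hAG, rfl⟩
      have hfree : ¬ ContainsCopy G (turanGraph M k') :=
        (hN₁ M (le_max_left _ _)).2 n G hAG
      have h1 : h n G ≤ exRel h n (turanGraph M k') :=
        le_csSup hbdd2 ⟨G, hfree, rfl⟩
      exact le_trans h1 hESSbounds.2
    · have h0 := hparam.2 n (turanGraph n (k' - 1))
      nlinarith
end

section
/- Let F be a graph with chromatic number k ≥ 2 and σ(F) = t. Then there exists N such that for all n ≥ N, every proper edge-coloring of the complete k-partite graph with one part of size t and k−1 parts of size n contains a rainbow copy of F. -/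
open SimpleGraph

/-- Part sizes: one part of size `t`, and `k - 1` parts of size `n`. -/
def unbalParts (k t n : ℕ) : Fin k → ℕ := fun i => if (i : ℕ) = 0 then t else n

theorem rainbow_greedy_aux (k t n nF : ℕ) (hk0 : 0 < k) (hn : nF ^ 3 + nF + 1 ≤ n)
    (F : SimpleGraph (Fin nF)) (Cc : F.Coloring (Fin k))
    (hcard : (Finset.univ.filter fun v => Cc v = (⟨0, hk0⟩ : Fin k)).card = t)
    (C : Type) (c : (Σ i, Fin (unbalParts k t n i)) → (Σ i, Fin (unbalParts k t n i)) → C)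
    (hc : ProperEdgeColoring (completeMultipartite (unbalParts k t n)) c) :
    HasRainbowCopy (completeMultipartite (unbalParts k t n)) c F := by
  classical
  set z0 : Fin k := ⟨0, hk0⟩ with hz0
  have hadj : ∀ x y : (Σ i, Fin (unbalParts k t n i)),
      (completeMultipartite (unbalParts k t n)).Adj x y ↔ x.1 ≠ y.1 := by
    intro x y; rfl
  have hsymm := hc.1
  have hprop : ∀ x y z : (Σ i, Fin (unbalParts k t n i)),
      x.1 ≠ y.1 → x.1 ≠ z.1 → y ≠ z → c x y ≠ c x z := by
    intro x y z h1 h2 h3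
    exact hc.2 x y z ((hadj x y).2 h1) ((hadj x z).2 h2) h3
  set class0 : Finset (Fin nF) := Finset.univ.filter (fun v => Cc v = z0) with hclass0
  have hpart0 : unbalParts k t n z0 = t := by simp [unbalParts, hz0]
  have hpartn : ∀ i : Fin k, i ≠ z0 → unbalParts k t n i = n := by
    intro i hi
    have : (i : ℕ) ≠ 0 := fun h => hi (Fin.ext h)
    simp [unbalParts, this]
  have hnpos : 0 < n := by omega
  have hcv : ∀ v, v ∉ class0 → Cc v ≠ z0 := by
    intro v hv; simpa [hclass0] using hv
  -- key induction
  have key : ∀ s : Finset (Fin nF), ∃ f : Fin nF → (Σ i, Fin (unbalParts k t n i)),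
      (∀ v, v ∈ class0 ∪ s → (f v).1 = Cc v) ∧
      (Set.InjOn f ↑(class0 ∪ s)) ∧
      (∀ u v u' v', u ∈ class0 ∪ s → v ∈ class0 ∪ s → u' ∈ class0 ∪ s → v' ∈ class0 ∪ s →
        F.Adj u v → F.Adj u' v' → s(u,v) ≠ s(u',v') → c (f u) (f v) ≠ c (f u') (f v')) := by
    intro s
    induction s using Finset.induction_on with
    | empty =>
      refine ⟨fun v => if h : v ∈ class0 then
          ⟨z0, Fin.cast hpart0.symm (finCongr hcard (class0.equivFin ⟨v, h⟩))⟩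
        else ⟨Cc v, Fin.cast (hpartn _ (hcv v h)).symm ⟨0, hnpos⟩⟩, ?_, ?_, ?_⟩
      · intro v hv
        rw [Finset.union_empty] at hv
        simp only [dif_pos hv]
        simp [hclass0] at hv
        exact hv.symm
      · intro x hx y hy hxy
        rw [Finset.union_empty] at hx hy
        simp only [Finset.mem_coe] at hx hy
        simp only [dif_pos hx, dif_pos hy] at hxy
        have h2 := (Sigma.mk.inj_iff.mp hxy).2
        have h3 : (Fin.cast hpart0.symm (finCongr hcard (class0.equivFin ⟨x, hx⟩)) : Fin (unbalParts k t n z0))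
            = Fin.cast hpart0.symm (finCongr hcard (class0.equivFin ⟨y, hy⟩)) := eq_of_heq h2
        have h5 : ((class0.equivFin ⟨x, hx⟩ : Fin class0.card) : ℕ)
            = ((class0.equivFin ⟨y, hy⟩ : Fin class0.card) : ℕ) := by
          simpa using congrArg Fin.val h3
        have h4 := class0.equivFin.injective (Fin.ext h5)
        exact congrArg Subtype.val h4
      · intro u v u' v' hu hv hu' hv' huv _ _
        rw [Finset.union_empty] at hu hv
        exfalso
        simp [hclass0] at hu hv
        exact Cc.valid huv (hu.trans hv.symm)
    | @insert a s ha ih =>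
      by_cases ha0 : a ∈ class0
      · have heq : class0 ∪ insert a s = class0 ∪ s := by
          rw [Finset.union_insert, Finset.insert_eq_self.2 (Finset.mem_union_left s ha0)]
        rw [heq]; exact ih
      · obtain ⟨f, hparts, hinj, hrain⟩ := ih
        set S := class0 ∪ s with hS
        have haS : a ∉ S := by
          simp [hS, ha, ha0]
        have haz : Cc a ≠ z0 := hcv a ha0
        have hie : unbalParts k t n (Cc a) = n := hpartn _ haz
        set femb : Fin n → (Σ i, Fin (unbalParts k t n i)) :=
          fun w => ⟨Cc a, Fin.cast hie.symm w⟩ with hfemb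
        have hfembfst : ∀ w, (femb w).1 = Cc a := fun _ => rfl
        have hembinj : Function.Injective femb := by
          intro w1 w2 h
          have := (Sigma.mk.inj_iff.mp h).2
          have h3 : (Fin.cast hie.symm w1 : Fin (unbalParts k t n (Cc a))) = Fin.cast hie.symm w2 := eq_of_heq this
          exact Fin.ext (by simpa using congrArg Fin.val h3)
        -- the bad sets
        set BadA : Finset (Fin n) := Finset.univ.filter (fun w => ∃ v ∈ S, f v = femb w) with hBadA
        set BadB : Finset (Fin n) := (S ×ˢ S ×ˢ S).biUnion (fun x => Finset.univ.filter
          (fun w => F.Adj a x.1 ∧ c (femb w) (f x.1) = c (f x.2.1) (f x.2.2))) with hBadB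
        have hScard : S.card ≤ nF := by
          simpa using Finset.card_le_univ S
        have hAcard : BadA.card ≤ nF := by
          have h1 : BadA.card ≤ (S.image f).card := by
            apply Finset.card_le_card_of_injOn femb
            · intro w hw
              rw [hBadA, Finset.mem_coe, Finset.mem_filter] at hw
              obtain ⟨v, hv, hfv⟩ := hw.2
              exact Finset.mem_image.2 ⟨v, hv, hfv⟩
            · intro x _ y _ h; exact hembinj h
          calc BadA.card ≤ (S.image f).card := h1
            _ ≤ S.card := Finset.card_image_le
            _ ≤ nF := hScard
        have hBcard : BadB.card ≤ nF ^ 3 := by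
          have h1 : BadB.card ≤ (S ×ˢ S ×ˢ S).card * 1 := by
            apply Finset.card_biUnion_le_card_mul
            intro x hx
            apply Finset.card_le_one.2
            intro w1 hw1 w2 hw2
            simp only [Finset.mem_filter] at hw1 hw2
            by_contra hne
            have hadjau : F.Adj a x.1 := hw1.2.1
            obtain ⟨u, p, q⟩ := x
            simp only [Finset.mem_product] at hx
            have hu : u ∈ S := hx.1
            have hfu1 : (f u).1 = Cc u := hparts u hu
            have hne1 : (f u).1 ≠ (femb w1).1 := by
              rw [hfu1]; exact fun h => (Cc.valid hadjau) ((hfembfst w1) ▸ h.symm)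
            have hne2 : (f u).1 ≠ (femb w2).1 := by
              rw [hfu1]; exact fun h => (Cc.valid hadjau) ((hfembfst w2) ▸ h.symm)
            have := hprop (f u) (femb w1) (femb w2) hne1 hne2 (fun h => hne (hembinj h))
            apply this
            rw [← hsymm (femb w1) (f u), ← hsymm (femb w2) (f u)]
            exact hw1.2.2.trans hw2.2.2.symm
          have h2 : (S ×ˢ S ×ˢ S).card ≤ nF ^ 3 := by
            rw [Finset.card_product, Finset.card_product]
            calc S.card * (S.card * S.card) ≤ nF * (nF * nF) :=
              Nat.mul_le_mul hScard (Nat.mul_le_mul hScard hScard)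
            _ = nF ^ 3 := by ring
          omega
        obtain ⟨w, hw⟩ : ∃ w : Fin n, w ∉ BadA ∪ BadB := by
          by_contra h
          push_neg at h
          have h1 : (Finset.univ : Finset (Fin n)) ⊆ BadA ∪ BadB := fun x _ => h x
          have h2 := Finset.card_le_card h1
          have h3 : (BadA ∪ BadB).card ≤ BadA.card + BadB.card := Finset.card_union_le _ _
          simp only [Finset.card_univ, Fintype.card_fin] at h2
          omega
        have hwA : w ∉ BadA := fun h => hw (Finset.mem_union_left _ h)
        have hwB : w ∉ BadB := fun h => hw (Finset.mem_union_right _ h)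
        set f' : Fin nF → (Σ i, Fin (unbalParts k t n i)) := Function.update f a (femb w) with hf'
        have hfS : ∀ v ∈ S, f' v = f v := by
          intro v hv
          exact Function.update_of_ne (ne_of_mem_of_not_mem hv haS) _ f
        have hfa : f' a = femb w := Function.update_self a _ f
        have hS' : class0 ∪ insert a s = insert a S := by
          rw [hS, Finset.union_insert]
        rw [hS']
        -- new-old
        have hNO : ∀ u ∈ S, F.Adj a u → ∀ p ∈ S, ∀ q ∈ S, F.Adj p q →
            c (f' a) (f' u) ≠ c (f' p) (f' q) := by
          intro u hu hau p hp q hq hpq heq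
          apply hwB
          rw [hBadB, Finset.mem_biUnion]
          refine ⟨(u, p, q), ?_, ?_⟩
          · simp [Finset.mem_product, hu, hp, hq]
          · simp only [Finset.mem_filter, Finset.mem_univ, true_and]
            refine ⟨hau, ?_⟩
            rw [hfa, hfS u hu, hfS p hp, hfS q hq] at heq
            exact heq
        -- new-new
        have hNN : ∀ u ∈ S, ∀ u' ∈ S, F.Adj a u → F.Adj a u' → u ≠ u' →
            c (f' a) (f' u) ≠ c (f' a) (f' u') := by
          intro u hu u' hu' hau hau' hne
          rw [hfa, hfS u hu, hfS u' hu']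
          apply hprop
          · rw [hparts u hu]
            exact fun h => (Cc.valid hau) ((hfembfst w) ▸ h)
          · rw [hparts u' hu']
            exact fun h => (Cc.valid hau') ((hfembfst w) ▸ h)
          · exact fun h => hne (hinj (Finset.mem_coe.2 hu) (Finset.mem_coe.2 hu') h)
        refine ⟨f', ?_, ?_, ?_⟩
        · intro v hv
          rcases Finset.mem_insert.1 hv with rfl | hv
          · rw [hfa]
          · rw [hfS v hv]; exact hparts v hv
        · intro x hx y hy hxy
          simp only [Finset.coe_insert, Set.mem_insert_iff, Finset.mem_coe] at hx hy
          rcases hx with rfl | hx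
          · rcases hy with rfl | hy
            · rfl
            · exfalso
              apply hwA
              rw [hBadA]
              simp only [Finset.mem_filter, Finset.mem_univ, true_and]
              exact ⟨y, hy, by rw [← hfS y hy, ← hxy, hfa]⟩
          · rcases hy with rfl | hy
            · exfalso
              apply hwA
              rw [hBadA]
              simp only [Finset.mem_filter, Finset.mem_univ, true_and]
              exact ⟨x, hx, by rw [← hfS x hx, hxy, hfa]⟩
            · rw [hfS x hx, hfS y hy] at hxy
              exact hinj (Finset.mem_coe.2 hx) (Finset.mem_coe.2 hy) hxy
        · -- rainbow
          intro u v u' v' hu hv hu' hv' huv hu'v' hne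
          -- orient each edge so that the second endpoint is in S
          have orient : ∀ p q, p ∈ insert a S → q ∈ insert a S → F.Adj p q →
              ∃ p₁ q₁, s(p₁,q₁) = s(p,q) ∧ c (f' p₁) (f' q₁) = c (f' p) (f' q) ∧
                F.Adj p₁ q₁ ∧ q₁ ∈ S ∧ (p₁ = a ∨ p₁ ∈ S) := by
            intro p q hp hq hpq
            rcases Finset.mem_insert.1 hq with rfl | hq
            · have hp' : p ∈ S := by
                rcases Finset.mem_insert.1 hp with rfl | hp'
                · exact absurd rfl hpq.ne
                · exact hp'
              exact ⟨q, p, Sym2.eq_swap, hsymm _ _, hpq.symm, hp', Or.inl rfl⟩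
            · refine ⟨p, q, rfl, rfl, hpq, hq, ?_⟩
              rcases Finset.mem_insert.1 hp with rfl | hp'
              · exact Or.inl rfl
              · exact Or.inr hp'
          obtain ⟨p₁, q₁, he1, hc1, hadj1, hq1, hp1⟩ := orient u v hu hv huv
          obtain ⟨p₂, q₂, he2, hc2, hadj2, hq2, hp2⟩ := orient u' v' hu' hv' hu'v'
          rw [← hc1, ← hc2]
          have hne' : s(p₁,q₁) ≠ s(p₂,q₂) := by rw [he1, he2]; exact hne
          rcases hp1 with rfl | hp1
          · rcases hp2 with rfl | hp2
            · -- both new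
              apply hNN q₁ hq1 q₂ hq2 hadj1 hadj2
              intro h
              exact hne' (by rw [h])
            · exact hNO q₁ hq1 hadj1 p₂ hp2 q₂ hq2 hadj2
          · rcases hp2 with rfl | hp2
            · exact (hNO q₂ hq2 hadj2 p₁ hp1 q₁ hq1 hadj1).symm
            · rw [hfS p₁ hp1, hfS q₁ hq1, hfS p₂ hp2, hfS q₂ hq2]
              exact hrain p₁ q₁ p₂ q₂ hp1 hq1 hp2 hq2 hadj1 hadj2 hne'
  obtain ⟨f, hparts, hinj, hrain⟩ := key Finset.univ
  have huniv : class0 ∪ Finset.univ = Finset.univ := by simp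
  rw [huniv] at hparts hinj hrain
  refine ⟨f, ?_, ?_, ?_⟩
  · intro x y hxy
    exact hinj (by simp) (by simp) hxy
  · intro u v huv
    rw [hadj, hparts u (Finset.mem_univ u), hparts v (Finset.mem_univ v)]
    exact Cc.valid huv
  · intro u v u' v' h1 h2 h3
    exact hrain u v u' v' (Finset.mem_univ _) (Finset.mem_univ _) (Finset.mem_univ _)
      (Finset.mem_univ _) h1 h2 h3

/-- Let `F` have chromatic number `k ≥ 2` and `σ(F) = t`. Then for
all sufficiently large `n`, every proper edge-coloring of the complete `k`-partite
graph with one part of size `t` and `k - 1` parts of size `n` contains a rainbow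
copy of `F`. -/
theorem rainbow_in_unbalanced_multipartite (k t nF : ℕ) (hk : 2 ≤ k)
    (F : SimpleGraph (Fin nF)) (hchi : F.chromaticNumber = (k : ℕ∞))
    (ht : graphSigma F k = t) :
    ∃ N : ℕ, ∀ n, N ≤ n → ∀ (C : Type)
      (c : (Σ i, Fin (unbalParts k t n i)) → (Σ i, Fin (unbalParts k t n i)) → C),
      ProperEdgeColoring (completeMultipartite (unbalParts k t n)) c →
      HasRainbowCopy (completeMultipartite (unbalParts k t n)) c F := by
  classical
  have hk0 : 0 < k := by omega
  have hmem : t ∈ {s : ℕ | ∃ C : F.Coloring (Fin k), ∃ i : Fin k,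
      (Finset.univ.filter fun v => C v = i).card = s} := by
    rw [← ht, graphSigma]
    apply Nat.sInf_mem
    obtain ⟨C⟩ : F.Colorable k := by
      rw [← SimpleGraph.chromaticNumber_le_iff_colorable]
      exact le_of_eq hchi
    exact ⟨_, C, ⟨0, hk0⟩, rfl⟩
  obtain ⟨C0, i0, hcard0⟩ := hmem
  set σe := Equiv.swap i0 (⟨0, hk0⟩ : Fin k) with hσe
  let Cc : F.Coloring (Fin k) := SimpleGraph.Coloring.mk (fun v => σe (C0 v))
    (fun {u v} h e => C0.valid h (σe.injective e))
  have hcard : (Finset.univ.filter fun v => Cc v = (⟨0, hk0⟩ : Fin k)).card = t := by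
    rw [← hcard0]
    congr 1
    ext v
    simp only [Finset.mem_filter, Finset.mem_univ, true_and]
    show σe (C0 v) = ⟨0, hk0⟩ ↔ C0 v = i0
    constructor
    · intro h
      have := σe.injective (a₁ := C0 v) (a₂ := i0)
      apply this
      rw [h, hσe, Equiv.swap_apply_left]
    · intro h
      rw [h, hσe, Equiv.swap_apply_left]
  exact ⟨nF ^ 3 + nF + 1, fun n hn C c hc => rainbow_greedy_aux k t n nF hk0 hn F Cc hcard C c hc⟩
end

section
/- Let F be a graph with chromatic number k ≥ 3 that has a color-critical edge (an edge whose deletion decreases the chromatic number). Then there exists N such that for all n ≥ N, every proper edge-coloring of T⁺(n,k−1) contains a rainbow copy of F, where T⁺(n,k−1) is the graph obtained from the Turán graph T(n,k−1) by adding one edge inside one of its smallest parts. -/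
open SimpleGraph

set_option maxHeartbeats 2000000 in
/-- Let `F` have chromatic number `k ≥ 3` and a color-critical edge.
Then for all sufficiently large `n`, every proper edge-coloring of `T⁺(n, k-1)`
contains a rainbow copy of `F`. -/
theorem rainbow_in_turanPlusEdge (k nF : ℕ) (hk : 3 ≤ k)
    (F : SimpleGraph (Fin nF)) (hchi : F.chromaticNumber = (k : ℕ∞))
    (hcrit : ∃ u v : Fin nF, F.Adj u v ∧
      (F.deleteEdges {s(u, v)}).chromaticNumber < (k : ℕ∞)) :
    ∃ N : ℕ, ∀ n, N ≤ n → ∀ (C : Type) (c : Fin n → Fin n → C),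
      ProperEdgeColoring (turanPlusEdge n (k - 1)) c →
      HasRainbowCopy (turanPlusEdge n (k - 1)) c F := by
  classical
  obtain ⟨u, v, huv, hlt⟩ := hcrit
  have hune : u ≠ v := huv.ne
  set r : ℕ := k - 1 with hrdef
  have hr2 : 2 ≤ r := by omega
  have hrpos : 0 < r := by omega
  -- a proper r-coloring of F minus the critical edge
  have hcol : (F.deleteEdges {s(u, v)}).Colorable r := by
    rw [← SimpleGraph.chromaticNumber_le_iff_colorable]
    have hk' : (k : ℕ∞) = (r : ℕ∞) + 1 := by
      have hkr : k = r + 1 := by omega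
      rw [hkr]; push_cast; ring
    rw [hk'] at hlt
    exact (ENat.lt_add_one_iff (by simp)).mp hlt
  obtain ⟨Cg⟩ := hcol
  -- the endpoints of the critical edge get the same color
  have hCuv : Cg u = Cg v := by
    by_contra hne
    have hFc : F.Colorable r := by
      refine ⟨SimpleGraph.Coloring.mk Cg ?_⟩
      intro a b hab
      by_cases hs : s(a, b) = s(u, v)
      · rcases Sym2.eq_iff.mp hs with ⟨rfl, rfl⟩ | ⟨rfl, rfl⟩
        · exact hne
        · exact fun h => hne h.symm
      · exact Cg.valid (by rw [SimpleGraph.deleteEdges_adj]; exact ⟨hab, by simp [hs]⟩)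
    have h2 := hFc.chromaticNumber_le
    rw [hchi] at h2
    rw [Nat.cast_le] at h2
    omega
  set d : Fin r := ⟨r - 1, by omega⟩ with hd
  set σc : Equiv.Perm (Fin r) := Equiv.swap (Cg u) d with hσ
  set jf : Fin nF → ℕ := fun w => ((σc (Cg w) : Fin r) : ℕ) with hjf
  have hjlt : ∀ w, jf w < r := fun w => (σc (Cg w)).isLt
  have hjfu : jf u = r - 1 := by simp [hjf, hσ, Equiv.swap_apply_left, hd]
  have hjfv : jf v = r - 1 := by
    have : jf v = jf u := by simp [hjf, hCuv]
    rw [this, hjfu]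
  have hjdiff : ∀ w p, w ≠ u → w ≠ v → F.Adj w p → jf w ≠ jf p := by
    intro w p hwu hwv hadj h
    have hne2 : s(w, p) ≠ s(u, v) := by
      intro hs
      rcases Sym2.eq_iff.mp hs with ⟨h1, _⟩ | ⟨h1, _⟩
      exacts [hwu h1, hwv h1]
    have hvalid : Cg w ≠ Cg p :=
      Cg.valid (by rw [SimpleGraph.deleteEdges_adj]; exact ⟨hadj, by simp [hne2]⟩)
    exact hvalid (σc.injective (Fin.val_injective h))
  refine ⟨r * (nF * nF * nF + nF + 2), ?_⟩
  intro n hn Cl c hc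
  have hn2 : 2 * r ≤ n := by
    have h1 : r * 2 ≤ r * (nF * nF * nF + nF + 2) := Nat.mul_le_mul_left r (by omega)
    omega
  set A : Fin n := ⟨r - 1, by omega⟩ with hA
  set B : Fin n := ⟨2 * r - 1, by omega⟩ with hB
  have hABne : A ≠ B := by
    intro h
    have := congrArg Fin.val h
    simp only [hA, hB] at this
    omega
  have hAmod : ((A : ℕ)) % r = r - 1 := Nat.mod_eq_of_lt (by omega)
  have hBmod : ((B : ℕ)) % r = r - 1 := by
    have h1 : (2 * r - 1) = (r - 1) + r := by omega
    show (2 * r - 1) % r = r - 1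
    rw [h1, Nat.add_mod_right]
    exact Nat.mod_eq_of_lt (by omega)
  have hadjres : ∀ x y : Fin n, (x : ℕ) % r ≠ (y : ℕ) % r → (turanPlusEdge n r).Adj x y := by
    intro x y h
    rw [turanPlusEdge, SimpleGraph.fromRel_adj]
    exact ⟨fun he => h (by rw [he]), Or.inl (Or.inl h)⟩
  have hAB : (turanPlusEdge n r).Adj A B := by
    rw [turanPlusEdge, SimpleGraph.fromRel_adj]
    exact ⟨hABne, Or.inl (Or.inr ⟨rfl, rfl⟩)⟩
  -- main greedy construction
  have key : ∀ S : Finset (Fin nF), u ∈ S → v ∈ S →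
      ∃ f : Fin nF → Fin n,
        Set.InjOn f ↑S ∧ f u = A ∧ f v = B ∧
        (∀ w ∈ S, (f w : ℕ) % r = jf w) ∧
        (∀ a ∈ S, ∀ b ∈ S, F.Adj a b → (turanPlusEdge n r).Adj (f a) (f b)) ∧
        (∀ a ∈ S, ∀ b ∈ S, ∀ a' ∈ S, ∀ b' ∈ S, F.Adj a b → F.Adj a' b' →
          s(a, b) ≠ s(a', b') → c (f a) (f b) ≠ c (f a') (f b')) := by
    intro S
    induction S using Finset.strongInduction with
    | _ S ih =>
      intro hu hv
      by_cases hS : ∃ w ∈ S, w ≠ u ∧ w ≠ v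
      · -- inductive step
        obtain ⟨w, hwS, hwu, hwv⟩ := hS
        have hsub : S.erase w ⊂ S := Finset.erase_ssubset hwS
        obtain ⟨f, hinj, hfu, hfv, hres, hadjf, hrb⟩ :=
          ih _ hsub (Finset.mem_erase.mpr ⟨Ne.symm hwu, hu⟩)
            (Finset.mem_erase.mpr ⟨Ne.symm hwv, hv⟩)
        set Xc : Finset (Fin n) := Finset.univ.filter (fun x : Fin n => (x : ℕ) % r = jf w)
          with hXc
        set T : Finset (Fin nF) := (S.erase w).filter (fun p => F.Adj w p) with hT
        set P : Finset (Fin nF × Fin nF × Fin nF) := T ×ˢ ((S.erase w) ×ˢ (S.erase w)) with hP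
        set bad : Finset (Fin n) := ((S.erase w).image f) ∪
          (P.biUnion fun t => Xc.filter fun x => c x (f t.1) = c (f t.2.1) (f t.2.2)) with hbad
        have hadjwp : ∀ p ∈ S.erase w, F.Adj w p → ∀ x ∈ Xc,
            (turanPlusEdge n r).Adj (f p) x := by
          intro p hp hadj x hx
          apply hadjres
          rw [hres p hp, (Finset.mem_filter.mp hx).2]
          exact fun h => hjdiff w p hwu hwv hadj h.symm
        have hfilt1 : ∀ t ∈ P,
            (Xc.filter fun x => c x (f t.1) = c (f t.2.1) (f t.2.2)).card ≤ 1 := by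
          intro t ht
          rw [Finset.card_le_one]
          intro x1 h1 x2 h2
          obtain ⟨hx1, hc1⟩ := Finset.mem_filter.mp h1
          obtain ⟨hx2, hc2⟩ := Finset.mem_filter.mp h2
          have hp : t.1 ∈ T := (Finset.mem_product.mp ht).1
          obtain ⟨hpS, hpadj⟩ := Finset.mem_filter.mp hp
          by_contra hnex
          have a1 := hadjwp t.1 hpS hpadj x1 hx1
          have a2 := hadjwp t.1 hpS hpadj x2 hx2
          refine hc.2 (f t.1) x1 x2 a1 a2 hnex ?_
          calc c (f t.1) x1 = c x1 (f t.1) := hc.1 _ _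
            _ = c (f t.2.1) (f t.2.2) := hc1
            _ = c x2 (f t.1) := hc2.symm
            _ = c (f t.1) x2 := hc.1 _ _
        have hcard_le_nF : ∀ (Q : Finset (Fin nF)), Q.card ≤ nF := by
          intro Q
          calc Q.card ≤ (Finset.univ : Finset (Fin nF)).card := Finset.card_le_univ _
            _ = nF := by simp
        have hbadcard : bad.card ≤ nF + nF * nF * nF := by
          have h1 : ((S.erase w).image f).card ≤ nF :=
            le_trans Finset.card_image_le (hcard_le_nF _)
          have h2 : (P.biUnion fun t =>
              Xc.filter fun x => c x (f t.1) = c (f t.2.1) (f t.2.2)).card ≤ nF * nF * nF := by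
            calc (P.biUnion fun t =>
                Xc.filter fun x => c x (f t.1) = c (f t.2.1) (f t.2.2)).card
                ≤ ∑ t ∈ P, (Xc.filter fun x => c x (f t.1) = c (f t.2.1) (f t.2.2)).card :=
                  Finset.card_biUnion_le
              _ ≤ ∑ _t ∈ P, 1 := Finset.sum_le_sum hfilt1
              _ = P.card := by simp
              _ = T.card * ((S.erase w).card * (S.erase w).card) := by
                  rw [hP, Finset.card_product, Finset.card_product]
              _ ≤ nF * (nF * nF) :=
                  Nat.mul_le_mul (hcard_le_nF _) (Nat.mul_le_mul (hcard_le_nF _) (hcard_le_nF _))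
              _ = nF * nF * nF := by ring
          calc bad.card ≤ ((S.erase w).image f).card + _ := Finset.card_union_le _ _
            _ ≤ nF + nF * nF * nF := Nat.add_le_add h1 h2
        have hXcard : nF * nF * nF + nF + 2 ≤ Xc.card := by
          have hdiv : nF * nF * nF + nF + 2 ≤ n / r := by
            rw [Nat.le_div_iff_mul_le hrpos]
            calc (nF * nF * nF + nF + 2) * r = r * (nF * nF * nF + nF + 2) := mul_comm _ _
              _ ≤ n := hn
          refine le_trans hdiv ?_
          have hbound : ∀ i : ℕ, i < n / r → jf w + i * r < n := by
            intro i hi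
            have h1 : (i + 1) * r ≤ n := by
              rw [← Nat.le_div_iff_mul_le hrpos]; omega
            rw [add_mul, one_mul] at h1
            have := hjlt w
            omega
          have := Finset.card_le_card_of_injOn
            (f := fun i : Fin (n / r) => (⟨jf w + (i : ℕ) * r, hbound i i.isLt⟩ : Fin n))
            (s := Finset.univ) (t := Xc)
            (by
              intro i _
              rw [hXc, Finset.mem_coe, Finset.mem_filter]
              refine ⟨Finset.mem_univ _, ?_⟩
              show (jf w + (i : ℕ) * r) % r = jf w
              rw [Nat.add_mul_mod_self_right]
              exact Nat.mod_eq_of_lt (hjlt w))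
            (by
              intro i _ j _ hij
              have hval := congrArg Fin.val hij
              simp only at hval
              have : (i : ℕ) * r = (j : ℕ) * r := by omega
              exact Fin.ext (Nat.eq_of_mul_eq_mul_right hrpos this))
          simpa using this
        have hex : (Xc \ bad).Nonempty := by
          rw [← Finset.card_pos]
          have hle := Finset.card_le_card_sdiff_add_card (s := Xc) (t := bad)
          omega
        obtain ⟨x, hx⟩ := hex
        obtain ⟨hxX, hxbad⟩ := Finset.mem_sdiff.mp hx
        have hxmod : (x : ℕ) % r = jf w := (Finset.mem_filter.mp hxX).2
        have hxim : ∀ p ∈ S.erase w, x ≠ f p := by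
          intro p hp h
          exact hxbad (Finset.mem_union_left _ (Finset.mem_image.mpr ⟨p, hp, h.symm⟩))
        have hxc : ∀ p ∈ S.erase w, F.Adj w p → ∀ a ∈ S.erase w, ∀ b ∈ S.erase w,
            c x (f p) ≠ c (f a) (f b) := by
          intro p hp hadj a ha b hb hcc
          refine hxbad (Finset.mem_union_right _ (Finset.mem_biUnion.mpr ?_))
          exact ⟨(p, a, b), Finset.mem_product.mpr ⟨Finset.mem_filter.mpr ⟨hp, hadj⟩,
            Finset.mem_product.mpr ⟨ha, hb⟩⟩, Finset.mem_filter.mpr ⟨hxX, hcc⟩⟩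
        set f' : Fin nF → Fin n := Function.update f w x with hf'def
        have hf'w : f' w = x := Function.update_self _ _ _
        have hf' : ∀ p, p ≠ w → f' p = f p := fun p hp => Function.update_of_ne hp _ _
        have hfe : ∀ z ∈ S.erase w, f' z = f z := fun z hz =>
          hf' z (Finset.mem_erase.mp hz).1
        have hmem : ∀ z ∈ S, z = w ∨ z ∈ S.erase w := by
          intro z hz
          rcases eq_or_ne z w with h | h
          · exact Or.inl h
          · exact Or.inr (Finset.mem_erase.mpr ⟨h, hz⟩)
        have hxadj : ∀ p ∈ S.erase w, F.Adj w p → (turanPlusEdge n r).Adj x (f p) := by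
          intro p hp hadj
          apply hadjres
          rw [hxmod, hres p hp]
          exact hjdiff w p hwu hwv hadj
        have hnew2 : ∀ p ∈ S.erase w, ∀ p' ∈ S.erase w, F.Adj w p → F.Adj w p' → p ≠ p' →
            c x (f p) ≠ c x (f p') := by
          intro p hp p' hp' hadj hadj' hne'
          have hfpne : f p ≠ f p' := fun h => hne' (hinj hp hp' h)
          exact hc.2 x (f p) (f p') (hxadj p hp hadj) (hxadj p' hp' hadj') hfpne
        refine ⟨f', ?_, ?_, ?_, ?_, ?_, ?_⟩
        · -- injective
          intro p hp q hq h
          rcases hmem p hp with rfl | hp2 <;> rcases hmem q hq with rfl | hq2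
          · rfl
          · rw [hf'w, hfe q hq2] at h
            exact absurd h (hxim q hq2)
          · rw [hf'w, hfe p hp2] at h
            exact absurd h.symm (hxim p hp2)
          · rw [hfe p hp2, hfe q hq2] at h
            exact hinj hp2 hq2 h
        · rw [hf' u (Ne.symm hwu)]; exact hfu
        · rw [hf' v (Ne.symm hwv)]; exact hfv
        · intro z hz
          rcases hmem z hz with rfl | hz2
          · rw [hf'w]; exact hxmod
          · rw [hfe z hz2]; exact hres z hz2
        · intro a ha b hb hadj
          rcases hmem a ha with rfl | ha2 <;> rcases hmem b hb with rfl | hb2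
          · exact absurd rfl hadj.ne
          · rw [hf'w, hfe b hb2]; exact hxadj b hb2 hadj
          · rw [hf'w, hfe a ha2]
            exact (hxadj a ha2 hadj.symm).symm
          · rw [hfe a ha2, hfe b hb2]; exact hadjf a ha2 b hb2 hadj
        · intro a ha b hb a' ha' b' hb' h1 h2 hne
          rcases hmem a ha with rfl | ha2 <;> rcases hmem b hb with rfl | hb2 <;>
            rcases hmem a' ha' with rfl | ha'2 <;> rcases hmem b' hb' with rfl | hb'2
          -- a = w, b = w: impossible
          all_goals (try exact absurd rfl h1.ne)
          all_goals (try exact absurd rfl h2.ne)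
          -- (w,b) vs (w,b')
          · rw [hf'w, hfe b hb2, hfe b' hb'2]
            exact hnew2 b hb2 b' hb'2 h1 h2 (fun h => hne (by rw [h]))
          -- (w,b) vs (a',w)
          · rw [hf'w, hfe b hb2, hfe a' ha'2, hc.1 (f a') x]
            exact hnew2 b hb2 a' ha'2 h1 h2.symm
              (fun h => hne (by rw [h]; exact Sym2.eq_swap))
          -- (w,b) vs (a',b')
          · rw [hf'w, hfe b hb2, hfe a' ha'2, hfe b' hb'2]
            exact hxc b hb2 h1 a' ha'2 b' hb'2
          -- (a,w) vs (w,b')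
          · rw [hf'w, hfe a ha2, hfe b' hb'2, hc.1 (f a) x]
            exact hnew2 a ha2 b' hb'2 h1.symm h2
              (fun h => hne (by rw [h]; exact Sym2.eq_swap))
          -- (a,w) vs (a',w)
          · rw [hf'w, hfe a ha2, hfe a' ha'2, hc.1 (f a) x, hc.1 (f a') x]
            exact hnew2 a ha2 a' ha'2 h1.symm h2.symm
              (fun h => hne (by rw [h]))
          -- (a,w) vs (a',b')
          · rw [hf'w, hfe a ha2, hfe a' ha'2, hfe b' hb'2, hc.1 (f a) x]
            exact hxc a ha2 h1.symm a' ha'2 b' hb'2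
          -- (a,b) vs (w,b')
          · rw [hf'w, hfe a ha2, hfe b hb2, hfe b' hb'2]
            exact (hxc b' hb'2 h2 a ha2 b hb2).symm
          -- (a,b) vs (a',w)
          · rw [hf'w, hfe a ha2, hfe b hb2, hfe a' ha'2]
            exact fun h => (hxc a' ha'2 h2.symm a ha2 b hb2)
              ((hc.1 x (f a')).trans h.symm)
          -- (a,b) vs (a',b')
          · rw [hfe a ha2, hfe b hb2, hfe a' ha'2, hfe b' hb'2]
            exact hrb a ha2 b hb2 a' ha'2 b' hb'2 h1 h2 hne
      · -- base case: S = {u, v}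
        push_neg at hS
        have hSuv : ∀ z ∈ S, z = u ∨ z = v := by
          intro z hz
          by_contra h
          push_neg at h
          exact h.2 (hS z hz h.1)
        set f : Fin nF → Fin n := fun z => if z = u then A else B with hfdef
        have hfu : f u = A := if_pos rfl
        have hfv : f v = B := if_neg (Ne.symm hune)
        have hfz : ∀ z ∈ S, f z = A ∨ f z = B := by
          intro z hz
          rcases hSuv z hz with rfl | rfl
          · exact Or.inl hfu
          · exact Or.inr hfv
        refine ⟨f, ?_, hfu, hfv, ?_, ?_, ?_⟩
        · intro p hp q hq h
          rcases hSuv p hp with rfl | rfl <;> rcases hSuv q hq with rfl | rfl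
          · rfl
          · rw [hfu, hfv] at h; exact absurd h hABne
          · rw [hfu, hfv] at h; exact absurd h.symm hABne
          · rfl
        · intro z hz
          rcases hSuv z hz with rfl | rfl
          · rw [hfu, hAmod, hjfu]
          · rw [hfv, hBmod, hjfv]
        · intro a ha b hb hadj
          rcases hSuv a ha with rfl | rfl <;> rcases hSuv b hb with rfl | rfl
          · exact absurd rfl hadj.ne
          · rw [hfu, hfv]; exact hAB
          · rw [hfu, hfv]; exact hAB.symm
          · exact absurd rfl hadj.ne
        · intro a ha b hb a' ha' b' hb' h1 h2 hne
          have e1 : s(a, b) = s(u, v) := by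
            rcases hSuv a ha with rfl | rfl <;> rcases hSuv b hb with rfl | rfl
            · exact absurd rfl h1.ne
            · rfl
            · exact Sym2.eq_swap
            · exact absurd rfl h1.ne
          have e2 : s(a', b') = s(u, v) := by
            rcases hSuv a' ha' with rfl | rfl <;> rcases hSuv b' hb' with rfl | rfl
            · exact absurd rfl h2.ne
            · rfl
            · exact Sym2.eq_swap
            · exact absurd rfl h2.ne
          exact absurd (e1.trans e2.symm) hne
  obtain ⟨f, hinj, _, _, _, hadjf, hrb⟩ :=
    key Finset.univ (Finset.mem_univ u) (Finset.mem_univ v)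
  refine ⟨f, ?_, ?_, ?_⟩
  · have h1 : Set.InjOn f Set.univ := by
      rw [← Finset.coe_univ]; exact hinj
    exact Set.injOn_univ.mp h1
  · intro a b hab
    exact hadjf a (Finset.mem_univ a) b (Finset.mem_univ b) hab
  · intro a b a' b' h1 h2 hne
    exact hrb a (Finset.mem_univ a) b (Finset.mem_univ b) a' (Finset.mem_univ a')
      b' (Finset.mem_univ b') h1 h2 hne
end

section
/- Let F be a graph with chromatic number k ≥ 3 that has a color-critical edge. Let 𝓐 be the family of all finite graphs G that admit a proper edge-coloring with no rainbow copy of F, and let 𝓕 be the family of all other graphs. Then (𝓐,𝓕) is an edge-critical partition: it is suitable with abstract chromatic number k, and for all sufficiently large n no graph in 𝓐 contains T⁺(n,k−1) as a subgraph, where T⁺(n,k−1) is obtained from the Turán graph T(n,k−1) by adding one edge inside one of its smallest parts. -/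
open SimpleGraph

/-- The family of graphs admitting a proper edge-coloring with no rainbow copy of `F`. -/
def rainbowFreeFam {nF : ℕ} (F : SimpleGraph (Fin nF)) : GraphFamily :=
  fun n G => ∃ (C : Type) (c : Fin n → Fin n → C),
    ProperEdgeColoring G c ∧ ¬ HasRainbowCopy G c F

section Aux

set_option linter.unusedVariables false

lemma sym2_proper {α : Type} (G : SimpleGraph α) :
    ProperEdgeColoring G (fun u v => s(u, v)) :=
  ⟨fun u v => Sym2.eq_swap, fun u v w _ _ hvw h => hvw (Sym2.congr_right.mp h)⟩

lemma colorable_of_copy {nF r : ℕ} (F : SimpleGraph (Fin nF)) (m : Fin r → ℕ)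
    (f : Fin nF → Σ i, Fin (m i))
    (hadj : ∀ ⦃a b⦄, F.Adj a b → (completeMultipartite m).Adj (f a) (f b)) :
    F.Colorable r :=
  ⟨SimpleGraph.Coloring.mk (fun w => (f w).1) (fun {a b} h => by
    have := hadj h
    simpa [completeMultipartite] using this)⟩


lemma card_residue (n r i : ℕ) (hr : 0 < r) (hi : i < r) :
    n / r ≤ ((Finset.univ : Finset (Fin n)).filter (fun x : Fin n => (x : ℕ) % r = i)).card := by
  have key : ∀ j, j < n / r → j * r + i < n := by
    intro j hj
    have h2 : (j + 1) * r ≤ (n / r) * r := Nat.mul_le_mul_right r hj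
    have h3 : (n / r) * r ≤ n := Nat.div_mul_le_self n r
    have h4 : j * r + i < (j + 1) * r := by rw [Nat.succ_mul]; omega
    omega
  calc n / r = (Finset.univ : Finset (Fin (n / r))).card := by simp
    _ ≤ _ := by
        apply Finset.card_le_card_of_injOn (fun j : Fin (n / r) => (⟨(j : ℕ) * r + i, key j j.isLt⟩ : Fin n))
        · intro j _
          refine Finset.mem_filter.mpr ⟨Finset.mem_univ _, ?_⟩
          show ((j : ℕ) * r + i) % r = i
          rw [Nat.mul_comm, Nat.mul_add_mod, Nat.mod_eq_of_lt hi]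
        · intro a _ b _ h
          have hval : (a : ℕ) * r + i = (b : ℕ) * r + i := congrArg Fin.val h
          have : (a : ℕ) = (b : ℕ) := by
            have := Nat.eq_of_mul_eq_mul_right hr (by omega : (a:ℕ) * r = (b:ℕ) * r)
            exact this
          exact Fin.ext this

lemma greedy_rainbow {α C : Type} (G : SimpleGraph α) (c : α → α → C)
    (hc : ProperEdgeColoring G c) {nF : ℕ} (F : SimpleGraph (Fin nF))
    (S : Finset (Fin nF)) (f₀ : Fin nF → α) (P : Fin nF → Finset α)
    (hS_inj : ∀ i ∈ S, ∀ j ∈ S, f₀ i = f₀ j → i = j)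
    (hS_adj : ∀ i ∈ S, ∀ j ∈ S, F.Adj i j → G.Adj (f₀ i) (f₀ j))
    (hS_rain : ∀ i ∈ S, ∀ j ∈ S, ∀ i' ∈ S, ∀ j' ∈ S, F.Adj i j → F.Adj i' j' →
      s(i, j) ≠ s(i', j') → c (f₀ i) (f₀ j) ≠ c (f₀ i') (f₀ j'))
    (hP_card : ∀ i ∉ S, nF ^ 3 + nF + 1 ≤ (P i).card)
    (hP_adj : ∀ i ∉ S, ∀ j ∉ S, F.Adj i j → ∀ x ∈ P i, ∀ y ∈ P j, x ≠ y → G.Adj x y)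
    (hPS_adj : ∀ i ∉ S, ∀ j ∈ S, F.Adj i j → ∀ x ∈ P i, G.Adj x (f₀ j)) :
    HasRainbowCopy G c F := by
  classical
  have main : ∀ i : ℕ, i ≤ nF → ∃ f : Fin nF → α,
      (∀ j ∈ S, f j = f₀ j) ∧
      (∀ j : Fin nF, j ∉ S → (j : ℕ) < i → f j ∈ P j) ∧
      (∀ a b : Fin nF, (a ∈ S ∨ (a:ℕ) < i) → (b ∈ S ∨ (b:ℕ) < i) → f a = f b → a = b) ∧
      (∀ a b : Fin nF, (a ∈ S ∨ (a:ℕ) < i) → (b ∈ S ∨ (b:ℕ) < i) → F.Adj a b →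
        G.Adj (f a) (f b)) ∧
      (∀ a b a' b' : Fin nF, (a ∈ S ∨ (a:ℕ) < i) → (b ∈ S ∨ (b:ℕ) < i) →
        (a' ∈ S ∨ (a':ℕ) < i) → (b' ∈ S ∨ (b':ℕ) < i) → F.Adj a b → F.Adj a' b' →
        s(a, b) ≠ s(a', b') → c (f a) (f b) ≠ c (f a') (f b')) := by
    intro i
    induction i with
    | zero =>
      intro _
      refine ⟨f₀, fun j _ => rfl, fun j _ h => by omega, ?_, ?_, ?_⟩
      · rintro a b (ha | ha) (hb | hb) h
        · exact hS_inj a ha b hb h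
        all_goals omega
      · rintro a b (ha | ha) (hb | hb) h
        · exact hS_adj a ha b hb h
        all_goals omega
      · rintro a b a' b' (ha | ha) (hb | hb) (ha' | ha') (hb' | hb') h1 h2 hne
        · exact hS_rain a ha b hb a' ha' b' hb' h1 h2 hne
        all_goals omega
    | succ i ih =>
      intro hi1
      obtain ⟨f, h1, h2, h3, h4, h5⟩ := ih (by omega)
      set ι : Fin nF := ⟨i, by omega⟩ with hι
      by_cases hιS : ι ∈ S
      · have hdown : ∀ a : Fin nF, (a ∈ S ∨ (a:ℕ) < i + 1) → (a ∈ S ∨ (a:ℕ) < i) := by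
          rintro a (ha | ha)
          · exact Or.inl ha
          · by_cases h : (a : ℕ) = i
            · exact Or.inl (by rwa [show a = ι from Fin.ext h])
            · exact Or.inr (by omega)
        refine ⟨f, h1, ?_, ?_, ?_, ?_⟩
        · intro j hj hji
          rcases hdown j (Or.inr hji) with h | h
          · exact absurd h hj
          · exact h2 j hj h
        · intro a b ha hb
          exact h3 a b (hdown a ha) (hdown b hb)
        · intro a b ha hb
          exact h4 a b (hdown a ha) (hdown b hb)
        · intro a b a' b' ha hb ha' hb'
          exact h5 a b a' b' (hdown a ha) (hdown b hb) (hdown a' ha') (hdown b' hb')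
      · -- choose a fresh vertex for ι
        set O : Fin nF → Prop := fun j => j ∈ S ∨ (j:ℕ) < i with hO
        set D : Finset (Fin nF) := Finset.univ.filter (fun j => j ∈ S ∨ (j:ℕ) < i) with hD
        have hmemD : ∀ j, j ∈ D ↔ O j := by intro j; simp [hD, hO]
        have hDcard : D.card ≤ nF := le_trans (Finset.card_le_univ D) (by simp)
        set Bad : Finset α := D.image f ∪
          (D ×ˢ D ×ˢ D).biUnion (fun t =>
            (P ι).filter (fun x => G.Adj (f t.1) x ∧ c (f t.1) x = c (f t.2.1) (f t.2.2)))
          with hBad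
        have hBadcard : Bad.card ≤ nF + nF ^ 3 := by
          refine le_trans (Finset.card_union_le _ _) (Nat.add_le_add ?_ ?_)
          · exact le_trans (Finset.card_image_le) hDcard
          · refine le_trans (Finset.card_biUnion_le) ?_
            have hone : ∀ t ∈ D ×ˢ D ×ˢ D,
                ((P ι).filter (fun x => G.Adj (f t.1) x ∧
                  c (f t.1) x = c (f t.2.1) (f t.2.2))).card ≤ 1 := by
              intro t _
              refine Finset.card_le_one.mpr ?_
              intro a ha b hb
              simp only [Finset.mem_filter] at ha hb
              by_contra hab
              exact hc.2 (f t.1) a b ha.2.1 hb.2.1 hab (ha.2.2.trans hb.2.2.symm)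
            calc _ ≤ ∑ _t ∈ D ×ˢ D ×ˢ D, 1 := Finset.sum_le_sum hone
              _ = (D ×ˢ D ×ˢ D).card := by simp
              _ ≤ nF ^ 3 := by
                  rw [Finset.card_product, Finset.card_product]
                  calc D.card * (D.card * D.card) ≤ nF * (nF * nF) := by
                        exact Nat.mul_le_mul hDcard (Nat.mul_le_mul hDcard hDcard)
                    _ = nF ^ 3 := by ring
        have hex : ∃ x ∈ P ι, x ∉ Bad := by
          have h' : 0 < ((P ι) \ Bad).card := by
            have hA := Finset.card_le_card_sdiff_add_card (s := P ι) (t := Bad)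
            have hB := hP_card ι hιS
            rcases Nat.eq_zero_or_pos ((P ι \ Bad).card) with h0 | hgood
            · exfalso
              rw [h0, zero_add] at hA
              have hBP : Bad.card < nF ^ 3 + nF + 1 := by omega
              exact absurd (le_trans hB hA) (not_le.mpr hBP)
            · exact hgood
          obtain ⟨x, hx⟩ := Finset.card_pos.mp h'
          exact ⟨x, (Finset.mem_sdiff.mp hx).1, (Finset.mem_sdiff.mp hx).2⟩
        obtain ⟨x, hxP, hxBad⟩ := hex
        set f' : Fin nF → α := Function.update f ι x with hf'
        have hfι : f' ι = x := Function.update_self ι x f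
        have hιnotO : ¬ O ι := by
          rintro (h | h)
          · exact hιS h
          · have hvi : (ι : ℕ) = i := rfl
            omega
        have hfeq : ∀ j, O j → f' j = f j := by
          intro j hj
          have hjι : j ≠ ι := by intro h; rw [h] at hj; exact hιnotO hj
          exact Function.update_of_ne hjι x f
        have hxne : ∀ j, O j → x ≠ f j := by
          intro j hj heq
          exact hxBad (Finset.mem_union_left _
            (Finset.mem_image.mpr ⟨j, (hmemD j).mpr hj, heq.symm⟩))
        have hxadj : ∀ j, O j → F.Adj ι j → G.Adj x (f j) := by
          intro j hj hadj
          by_cases hjS : j ∈ S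
          · rw [h1 j hjS]; exact hPS_adj ι hιS j hjS hadj x hxP
          · have hji : (j : ℕ) < i := by rcases hj with h | h; exact absurd h hjS; exact h
            exact hP_adj ι hιS j hjS hadj x hxP (f j) (h2 j hjS hji) (hxne j hj)
        have hxcol : ∀ j j' l', O j → O j' → O l' → G.Adj (f j) x →
            c (f j) x ≠ c (f j') (f l') := by
          intro j j' l' hj hj' hl' hadj heq
          refine hxBad (Finset.mem_union_right _ (Finset.mem_biUnion.mpr
            ⟨(j, j', l'), ?_, Finset.mem_filter.mpr ⟨hxP, hadj, heq⟩⟩))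
          simp only [Finset.mem_product]
          exact ⟨(hmemD j).mpr hj, (hmemD j').mpr hj', (hmemD l').mpr hl'⟩
        have hsplit : ∀ j : Fin nF, (j ∈ S ∨ (j:ℕ) < i + 1) → O j ∨ j = ι := by
          rintro j (hj | hj)
          · exact Or.inl (Or.inl hj)
          · by_cases h : (j : ℕ) = i
            · exact Or.inr (Fin.ext h)
            · exact Or.inl (Or.inr (by omega))
        have hinj : ∀ a b : Fin nF, (a ∈ S ∨ (a:ℕ) < i + 1) → (b ∈ S ∨ (b:ℕ) < i + 1) →
            f' a = f' b → a = b := by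
          intro a b ha hb heq
          rcases hsplit a ha with hOa | rfl <;> rcases hsplit b hb with hOb | rfl
          · exact h3 a b hOa hOb (by rwa [hfeq a hOa, hfeq b hOb] at heq)
          · rw [hfeq a hOa, hfι] at heq; exact absurd heq.symm (hxne a hOa)
          · rw [hfι, hfeq b hOb] at heq; exact absurd heq (hxne b hOb)
          · rfl
        have hadj' : ∀ a b : Fin nF, (a ∈ S ∨ (a:ℕ) < i + 1) → (b ∈ S ∨ (b:ℕ) < i + 1) →
            F.Adj a b → G.Adj (f' a) (f' b) := by
          intro a b ha hb hab
          rcases hsplit a ha with hOa | rfl <;> rcases hsplit b hb with hOb | rfl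
          · rw [hfeq a hOa, hfeq b hOb]; exact h4 a b hOa hOb hab
          · rw [hfeq a hOa, hfι]; exact (hxadj a hOa hab.symm).symm
          · rw [hfι, hfeq b hOb]; exact hxadj b hOb hab
          · exact absurd hab (F.irrefl)
        refine ⟨f', ?_, ?_, hinj, hadj', ?_⟩
        · intro j hj; rw [hfeq j (Or.inl hj)]; exact h1 j hj
        · intro j hj hji
          rcases hsplit j (Or.inr hji) with hOj | rfl
          · rcases hOj with h | h
            · exact absurd h hj
            · rw [hfeq j (Or.inr h)]; exact h2 j hj h
          · rw [hfι]; exact hxP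
        · -- rainbow
          have main1 : ∀ b a' b', O b → O a' → O b' → F.Adj ι b → F.Adj a' b' →
              c x (f b) ≠ c (f a') (f b') := by
            intro b a' b' hb ha' hb' hadj hadj'
            rw [hc.1 x (f b)]
            exact hxcol b a' b' hb ha' hb' (hxadj b hb hadj).symm
          have main2 : ∀ b b', O b → O b' → b ≠ b' → F.Adj ι b → F.Adj ι b' →
              c x (f b) ≠ c x (f b') := by
            intro b b' hb hb' hne hadj hadj'
            exact hc.2 x (f b) (f b') (hxadj b hb hadj) (hxadj b' hb' hadj')
              (fun h => hne (h3 b b' hb hb' h))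
          intro a b a' b' ha hb ha' hb' e1 e2 hne
          rcases hsplit a ha with hOa | rfl <;> rcases hsplit b hb with hOb | rfl <;>
            rcases hsplit a' ha' with hOa' | rfl <;> rcases hsplit b' hb' with hOb' | rfl
          -- 16 cases; those with both endpoints of an edge = ι are impossible
          · rw [hfeq a hOa, hfeq b hOb, hfeq a' hOa', hfeq b' hOb']
            exact h5 a b a' b' hOa hOb hOa' hOb' e1 e2 hne
          · -- edge2 = (a', ι)
            rw [hfeq a hOa, hfeq b hOb, hfeq a' hOa', hfι, hc.1 (f a') x]
            exact (main1 a' a b hOa' hOa hOb e2.symm e1).symm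
          · -- edge2 = (ι, b')
            rw [hfeq a hOa, hfeq b hOb, hfι, hfeq b' hOb']
            exact (main1 b' a b hOb' hOa hOb e2 e1).symm
          · exact absurd e2 (F.irrefl)
          · -- edge1 = (a, ι)
            rw [hfeq a hOa, hfι, hfeq a' hOa', hfeq b' hOb', hc.1 (f a) x]
            exact main1 a a' b' hOa hOa' hOb' e1.symm e2
          · -- edge1 = (a, ι), edge2 = (a', ι)
            rw [hfeq a hOa, hfι, hfeq a' hOa', hc.1 (f a) x, hc.1 (f a') x]
            refine main2 a a' hOa hOa' ?_ e1.symm e2.symm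
            intro h; exact hne (by rw [h])
          · -- edge1 = (a, ι), edge2 = (ι, b')
            rw [hfeq a hOa, hfι, hfeq b' hOb', hc.1 (f a) x]
            refine main2 a b' hOa hOb' ?_ e1.symm e2
            intro h; subst h
            exact hne (Sym2.eq_swap)
          · exact absurd e2 (F.irrefl)
          · -- edge1 = (ι, b)
            rw [hfι, hfeq b hOb, hfeq a' hOa', hfeq b' hOb']
            exact main1 b a' b' hOb hOa' hOb' e1 e2
          · -- edge1 = (ι, b), edge2 = (a', ι)
            rw [hfι, hfeq b hOb, hfeq a' hOa', hc.1 (f a') x]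
            refine main2 b a' hOb hOa' ?_ e1 e2.symm
            intro h; subst h
            exact hne (Sym2.eq_swap).symm
          · -- edge1 = (ι, b), edge2 = (ι, b')
            rw [hfι, hfeq b hOb, hfeq b' hOb']
            refine main2 b b' hOb hOb' ?_ e1 e2
            intro h; exact hne (by rw [h])
          · exact absurd e2 (F.irrefl)
          · exact absurd e1 (F.irrefl)
          · exact absurd e1 (F.irrefl)
          · exact absurd e1 (F.irrefl)
          · exact absurd e1 (F.irrefl)
  obtain ⟨f, _, _, h3, h4, h5⟩ := main nF le_rfl
  have hall : ∀ j : Fin nF, j ∈ S ∨ (j:ℕ) < nF := fun j => Or.inr j.isLt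
  exact ⟨f, fun a b h => h3 a b (hall a) (hall b) h,
    fun a b h => h4 a b (hall a) (hall b) h,
    fun a b a' b' e1 e2 hne => h5 a b a' b' (hall a) (hall b) (hall a') (hall b') e1 e2 hne⟩


lemma mem_rainbowFree_multipartite {nF r : ℕ} (F : SimpleGraph (Fin nF))
    (hncol : ¬ F.Colorable r) (m : Fin r → ℕ) :
    MemFam (rainbowFreeFam F) (completeMultipartite m) := by
  classical
  let n := Fintype.card (Σ i, Fin (m i))
  let e : Fin n ≃ (Σ i, Fin (m i)) := (Fintype.equivFin _).symm
  let H : SimpleGraph (Fin n) := (completeMultipartite m).comap e.toEmbedding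
  have iso : H ≃g completeMultipartite m := SimpleGraph.Iso.comap e _
  refine ⟨n, H, ⟨iso.symm⟩, Sym2 (Fin n), fun u v => s(u, v), sym2_proper H, ?_⟩
  rintro ⟨f, hinj, hadj, -⟩
  exact hncol (colorable_of_copy F m (fun w => iso (f w))
    (fun a b h => iso.map_adj_iff.mpr (hadj h)))

end Aux

/-- Let `F` have chromatic number `k ≥ 3` and a color-critical edge,
and let `𝓐` be the family of graphs admitting a proper edge-coloring with no rainbow
copy of `F`. Then `(𝓐, 𝓐ᶜ)` is an edge-critical partition: it is suitable with
abstract chromatic number `k`, and for all sufficiently large `n` no graph in `𝓐`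
contains `T⁺(n, k-1)` as a subgraph. -/
theorem rainbowFreeFam_edgeCritical (k nF : ℕ) (hk : 3 ≤ k)
    (F : SimpleGraph (Fin nF)) (hchi : F.chromaticNumber = (k : ℕ∞))
    (hcrit : ∃ u v : Fin nF, F.Adj u v ∧
      (F.deleteEdges {s(u, v)}).chromaticNumber < (k : ℕ∞)) :
    EdgeCritical (rainbowFreeFam F) k := by
  classical
  obtain ⟨u, v, huv, hlt⟩ := hcrit
  have huvne : u ≠ v := F.ne_of_adj huv
  -- colorability facts
  have hcolk : F.Colorable k := chromaticNumber_le_iff_colorable.mp (le_of_eq hchi)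
  have hncol : ¬ F.Colorable (k - 1) := by
    intro h
    have h2 := chromaticNumber_le_iff_colorable.mpr h
    rw [hchi] at h2
    have h3 : k ≤ k - 1 := Nat.cast_le.mp h2
    omega
  have hcole : (F.deleteEdges {s(u, v)}).Colorable (k - 1) := by
    apply chromaticNumber_le_iff_colorable.mp
    have hksplit : (k : ℕ∞) = ((k - 1 : ℕ) : ℕ∞) + 1 := by
      have h6 : k = k - 1 + 1 := by omega
      calc (k : ℕ∞) = ((k - 1 + 1 : ℕ) : ℕ∞) := by rw [← h6]
        _ = ((k - 1 : ℕ) : ℕ∞) + 1 := by push_cast; ring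
    rw [hksplit] at hlt
    exact (ENat.lt_add_one_iff (by simp)).mp hlt
  obtain ⟨C0⟩ := hcole
  have hdel : ∀ {a b : Fin nF}, F.Adj a b → s(a, b) ≠ s(u, v) →
      (F.deleteEdges {s(u, v)}).Adj a b := by
    intro a b hab he
    rw [SimpleGraph.deleteEdges_adj]
    exact ⟨hab, by simpa using he⟩
  have huvc : C0 u = C0 v := by
    by_contra hne
    apply hncol
    refine ⟨SimpleGraph.Coloring.mk (fun w => C0 w) ?_⟩
    intro a b hab
    by_cases he : s(a, b) = s(u, v)
    · rcases Sym2.eq_iff.mp he with ⟨rfl, rfl⟩ | ⟨rfl, rfl⟩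
      · exact hne
      · exact fun h => hne h.symm
    · exact C0.valid (hdel hab he)
  have hr2 : 2 ≤ k - 1 := by omega
  set last : Fin (k - 1) := ⟨k - 2, by omega⟩ with hlast
  set χ' : Fin nF → Fin (k - 1) := fun w => Equiv.swap (C0 u) last (C0 w) with hχ'
  have hχ'valid : ∀ {a b : Fin nF}, F.Adj a b → s(a, b) ≠ s(u, v) → χ' a ≠ χ' b := by
    intro a b hab he h
    exact C0.valid (hdel hab he) ((Equiv.swap (C0 u) last).injective h)
  have hχ'u : χ' u = last := by simp [hχ']
  have hχ'v : χ' v = last := by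
    show Equiv.swap (C0 u) last (C0 v) = last
    rw [← huvc]
    simp
  -- bound
  set B : ℕ := nF ^ 3 + nF + 1 with hBdef
  have hB1 : 1 ≤ B := by omega
  -- Negative A: large complete graphs are not in the family
  have hTop : ∀ n : ℕ, B ≤ n → ¬ rainbowFreeFam F n ⊤ := by
    rintro n hn ⟨C, c, hpc, hnr⟩
    apply hnr
    have h0 : 0 < n := by omega
    apply greedy_rainbow ⊤ c hpc F ∅ (fun _ => ⟨0, h0⟩) (fun _ => Finset.univ)
    · intro i hi; simp at hi
    · intro i hi; simp at hi
    · intro i hi; simp at hi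
    · intro i _; simp only [Finset.card_univ, Fintype.card_fin]; exact hn
    · intro i _ j _ hadj x _ y _ hxy; simpa using hxy
    · intro i _ j hj; simp at hj
  -- Negative B: no member contains the Turán graph T(n, k)
  have hTuran : ∀ n : ℕ, k * B ≤ n → ∀ (n' : ℕ) (G : SimpleGraph (Fin n')),
      rainbowFreeFam F n' G → ¬ ContainsCopy G (turanGraph n k) := by
    rintro n hn n' G ⟨C, c, hpc, hnr⟩ ⟨g, hginj, hgadj⟩
    obtain ⟨χ⟩ := hcolk
    apply hnr
    have hk0 : 0 < k := by omega
    have hdiv : B ≤ n / k := (Nat.le_div_iff_mul_le hk0).mpr (by rw [Nat.mul_comm]; exact hn)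
    have hn0 : 0 < n := by
      have := Nat.div_le_self n k
      omega
    apply greedy_rainbow G c hpc F ∅ (fun _ => g ⟨0, hn0⟩)
      (fun w => ((Finset.univ : Finset (Fin n)).filter
        (fun x : Fin n => (x : ℕ) % k = (χ w : ℕ))).image g)
    · intro i hi; simp at hi
    · intro i hi; simp at hi
    · intro i hi; simp at hi
    · intro i _
      rw [Finset.card_image_of_injective _ hginj]
      calc nF ^ 3 + nF + 1 = B := by rw [hBdef]
        _ ≤ n / k := hdiv
        _ ≤ _ := card_residue n k (χ i) hk0 (χ i).isLt
    · intro i _ j _ hadj x hx y hy hxy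
      obtain ⟨x₀, hx₀, rfl⟩ := Finset.mem_image.mp hx
      obtain ⟨y₀, hy₀, rfl⟩ := Finset.mem_image.mp hy
      have hx₀' := (Finset.mem_filter.mp hx₀).2
      have hy₀' := (Finset.mem_filter.mp hy₀).2
      apply hgadj
      show x₀ % k ≠ y₀ % k
      have hχne : χ i ≠ χ j := χ.valid hadj
      have : (x₀ : ℕ) % k ≠ (y₀ : ℕ) % k := by
        rw [hx₀', hy₀']
        exact fun h => hχne (Fin.ext h)
      simpa using this
    · intro i _ j hj; simp at hj
  -- Negative C: no member contains T⁺(n, k - 1)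
  have hTP : ∀ n : ℕ, k * (B + 2) ≤ n → ∀ (n' : ℕ) (G : SimpleGraph (Fin n')),
      rainbowFreeFam F n' G → ¬ ContainsCopy G (turanPlusEdge n (k - 1)) := by
    rintro n hn n' G ⟨C, c, hpc, hnr⟩ ⟨g, hginj, hgadj⟩
    apply hnr
    have hr0 : 0 < (k - 1) := by omega
    have hk0 : 0 < k := by omega
    have hdivk : B + 2 ≤ n / k := (Nat.le_div_iff_mul_le hk0).mpr (by rw [Nat.mul_comm]; exact hn)
    have hdivr : n / k ≤ n / (k - 1) := Nat.div_le_div_left (by omega) hr0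
    have hnk : 2 * k ≤ n := by
      have h1 : k * 2 ≤ k * (B + 2) := Nat.mul_le_mul_left k (by omega)
      omega
    have hyn : (k - 1) - 1 < n := by omega
    have hzn : 2 * (k - 1) - 1 < n := by omega
    set yF : Fin n := ⟨(k - 1) - 1, hyn⟩ with hyF
    set zF : Fin n := ⟨2 * (k - 1) - 1, hzn⟩ with hzF
    have hyval : (yF : ℕ) = (k - 1) - 1 := rfl
    have hzval : (zF : ℕ) = 2 * (k - 1) - 1 := rfl
    have hyz : yF ≠ zF := by
      intro h
      have h7 := congrArg Fin.val h
      rw [hyval, hzval] at h7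
      omega
    have hymod : (yF : ℕ) % (k - 1) = (k - 1) - 1 := Nat.mod_eq_of_lt (by omega)
    have hzmod : (zF : ℕ) % (k - 1) = (k - 1) - 1 := by
      show (2 * (k - 1) - 1) % (k - 1) = (k - 1) - 1
      have h1 : 2 * (k - 1) - 1 = (k - 1) + ((k - 1) - 1) := by omega
      rw [h1, Nat.add_mod_left, Nat.mod_eq_of_lt (by omega)]
    have hpin : (turanPlusEdge n (k - 1)).Adj yF zF := by
      rw [turanPlusEdge, SimpleGraph.fromRel_adj]
      exact ⟨hyz, Or.inl (Or.inr ⟨rfl, rfl⟩)⟩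
    set S : Finset (Fin nF) := {u, v} with hS
    have hmemS : ∀ w, w ∈ S ↔ w = u ∨ w = v := by
      intro w; simp [hS]
    set f₀ : Fin nF → Fin n' := fun w => if w = u then g yF else g zF with hf₀
    have hfu : f₀ u = g yF := if_pos rfl
    have hfv : f₀ v = g zF := if_neg (fun h => huvne h.symm)
    -- any F-edge inside S is the edge uv
    have hedgeS : ∀ i j : Fin nF, i ∈ S → j ∈ S → F.Adj i j → s(i, j) = s(u, v) := by
      intro i j hi hj hadj
      rcases (hmemS i).mp hi with h1 | h1 <;> rcases (hmemS j).mp hj with h2 | h2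
      · rw [h1, h2] at hadj; exact absurd hadj (F.irrefl)
      · rw [h1, h2]
      · rw [h1, h2]; exact Sym2.eq_swap
      · rw [h1, h2] at hadj; exact absurd hadj (F.irrefl)
    -- color of a vertex outside S adjacent to u or v is not `last`
    have hnotlast : ∀ i : Fin nF, i ∉ S → ∀ j, j ∈ S → F.Adj i j → χ' i ≠ last := by
      intro i hi j hj hadj
      have hiu : i ≠ u := fun h => hi ((hmemS i).mpr (Or.inl h))
      have hiv : i ≠ v := fun h => hi ((hmemS i).mpr (Or.inr h))
      have hne : s(i, j) ≠ s(u, v) := by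
        intro h
        rcases Sym2.eq_iff.mp h with ⟨h1, h2⟩ | ⟨h1, h2⟩
        · exact hiu h1
        · exact hiv h1
      have hvalid := hχ'valid hadj hne
      rcases (hmemS j).mp hj with h | h
      · rw [h] at hvalid; exact fun hEq => hvalid (hEq.trans hχ'u.symm)
      · rw [h] at hvalid; exact fun hEq => hvalid (hEq.trans hχ'v.symm)
    set P : Fin nF → Finset (Fin n') := fun w =>
      ((Finset.univ : Finset (Fin n)).filter (fun x : Fin n =>
        (x : ℕ) % (k - 1) = (χ' w : ℕ) ∧ (x : ℕ) ≠ (k - 1) - 1 ∧ (x : ℕ) ≠ 2 * (k - 1) - 1)).image g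
      with hP
    -- facts about elements of P
    have hPmem : ∀ w, ∀ x₀ : Fin n,
        x₀ ∈ (Finset.univ : Finset (Fin n)).filter (fun x : Fin n =>
          (x : ℕ) % (k - 1) = (χ' w : ℕ) ∧ (x : ℕ) ≠ (k - 1) - 1 ∧ (x : ℕ) ≠ 2 * (k - 1) - 1) →
        (x₀ : ℕ) % (k - 1) = (χ' w : ℕ) ∧ (x₀ : ℕ) ≠ (k - 1) - 1 ∧ (x₀ : ℕ) ≠ 2 * (k - 1) - 1 :=
      fun w x₀ h => (Finset.mem_filter.mp h).2
    apply greedy_rainbow G c hpc F S f₀ P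
    · -- injective on S
      intro i hi j hj heq
      rcases (hmemS i).mp hi with h1 | h1 <;> rcases (hmemS j).mp hj with h2 | h2
      · rw [h1, h2]
      · rw [h1, h2, hfu, hfv] at heq
        exact (absurd (hginj heq) hyz)
      · rw [h1, h2, hfu, hfv] at heq
        exact (absurd (hginj heq.symm) hyz)
      · rw [h1, h2]
    · -- adjacency on S
      intro i hi j hj hadj
      rcases (hmemS i).mp hi with h1 | h1 <;> rcases (hmemS j).mp hj with h2 | h2
      · rw [h1, h2] at hadj; exact absurd hadj (F.irrefl)
      · rw [h1, h2, hfu, hfv]; exact hgadj hpin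
      · rw [h1, h2, hfu, hfv]; exact (hgadj hpin).symm
      · rw [h1, h2] at hadj; exact absurd hadj (F.irrefl)
    · -- rainbow on S (vacuous: only one edge)
      intro i hi j hj i' hi' j' hj' e1 e2 hne
      exact absurd ((hedgeS i j hi hj e1).trans (hedgeS i' j' hi' hj' e2).symm) hne
    · -- cardinality of candidate sets
      intro i _
      rw [hP]
      rw [Finset.card_image_of_injective _ hginj]
      set A : Finset (Fin n) := (Finset.univ : Finset (Fin n)).filter
        (fun x : Fin n => (x : ℕ) % (k - 1) = (χ' i : ℕ)) with hA
      have hAcard : n / (k - 1) ≤ A.card := card_residue n (k - 1) (χ' i) hr0 (χ' i).isLt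
      have hsub : A \ {yF, zF} ⊆ (Finset.univ : Finset (Fin n)).filter (fun x : Fin n =>
          (x : ℕ) % (k - 1) = (χ' i : ℕ) ∧ (x : ℕ) ≠ (k - 1) - 1 ∧ (x : ℕ) ≠ 2 * (k - 1) - 1) := by
        intro x hx
        obtain ⟨hxA, hxne⟩ := Finset.mem_sdiff.mp hx
        simp only [Finset.mem_insert, Finset.mem_singleton, not_or] at hxne
        refine Finset.mem_filter.mpr ⟨Finset.mem_univ _, (Finset.mem_filter.mp hxA).2, ?_, ?_⟩
        · intro h; exact hxne.1 (Fin.ext h)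
        · intro h; exact hxne.2 (Fin.ext h)
      have h1 : A.card - 2 ≤ (A \ {yF, zF}).card := by
        have h2 := Finset.le_card_sdiff ({yF, zF} : Finset (Fin n)) A
        have h3 : ({yF, zF} : Finset (Fin n)).card ≤ 2 := by
          apply le_trans (Finset.card_insert_le _ _)
          simp
        omega
      have h4 := Finset.card_le_card hsub
      omega
    · -- cross adjacency of candidate sets
      intro i hi j hj hadj x hx y hy hxy
      obtain ⟨x₀, hx₀, rfl⟩ := Finset.mem_image.mp hx
      obtain ⟨y₀, hy₀, rfl⟩ := Finset.mem_image.mp hy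
      have hx₀' := hPmem i x₀ hx₀
      have hy₀' := hPmem j y₀ hy₀
      have hiu : i ≠ u := fun h => hi ((hmemS i).mpr (Or.inl h))
      have hiv : i ≠ v := fun h => hi ((hmemS i).mpr (Or.inr h))
      have hsne : s(i, j) ≠ s(u, v) := by
        intro h
        rcases Sym2.eq_iff.mp h with ⟨h1, h2⟩ | ⟨h1, h2⟩
        · exact hiu h1
        · exact hiv h1
      have hχne : χ' i ≠ χ' j := hχ'valid hadj hsne
      have hmodne : (x₀ : ℕ) % (k - 1) ≠ (y₀ : ℕ) % (k - 1) := by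
        rw [hx₀'.1, hy₀'.1]
        exact fun h => hχne (Fin.ext h)
      apply hgadj
      rw [turanPlusEdge, SimpleGraph.fromRel_adj]
      exact ⟨fun h => hmodne (by rw [h]), Or.inl (Or.inl hmodne)⟩
    · -- adjacency of candidates with pinned vertices
      intro i hi j hj hadj x hx
      obtain ⟨x₀, hx₀, rfl⟩ := Finset.mem_image.mp hx
      have hx₀' := hPmem i x₀ hx₀
      have hlastne : χ' i ≠ last := hnotlast i hi j hj hadj
      have hvalne : (x₀ : ℕ) % (k - 1) ≠ (k - 1) - 1 := by
        rw [hx₀'.1]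
        intro h
        apply hlastne
        apply Fin.ext
        rw [h, hlast]
        show k - 1 - 1 = k - 2
        omega
      rcases (hmemS j).mp hj with h | h
      · rw [h, hfu]
        apply hgadj
        rw [turanPlusEdge, SimpleGraph.fromRel_adj]
        refine ⟨?_, Or.inl (Or.inl (by rw [hymod]; exact hvalne))⟩
        intro h9
        exact hvalne (by rw [h9, hymod])
      · rw [h, hfv]
        apply hgadj
        rw [turanPlusEdge, SimpleGraph.fromRel_adj]
        refine ⟨?_, Or.inl (Or.inl (by rw [hzmod]; exact hvalne))⟩
        intro h9
        exact hvalne (by rw [h9, hzmod])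
  -- Negative D: no j ≥ k works for AllBigMultipartiteIn
  have hMulti : ∀ j : ℕ, k ≤ j → ¬ AllBigMultipartiteIn (rainbowFreeFam F) j := by
    rintro j hkj ⟨N, hN⟩
    set m : Fin j → ℕ := fun _ => N + B with hm
    obtain ⟨n, H, ⟨e⟩, C, c, hpc, hnr⟩ := hN m (fun i => Nat.le_add_right N B)
    apply hnr
    obtain ⟨χ⟩ := hcolk
    have hj0 : 0 < j := by omega
    set χj : Fin nF → Fin j := fun w => Fin.castLE hkj (χ w) with hχj
    have hdummy : Σ i, Fin (m i) := ⟨⟨0, hj0⟩, ⟨0, by show 0 < N + B; omega⟩⟩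
    apply greedy_rainbow H c hpc F ∅ (fun _ => e hdummy)
      (fun w => ((Finset.univ : Finset (Σ i, Fin (m i))).filter
        (fun s => s.1 = χj w)).image (fun s => e s))
    · intro i hi; simp at hi
    · intro i hi; simp at hi
    · intro i hi; simp at hi
    · intro i _
      rw [Finset.card_image_of_injective _ (RelIso.injective e)]
      have hinj2 : ∀ a ∈ (Finset.univ : Finset (Fin (m (χj i)))), ∀ b ∈ Finset.univ,
          (⟨χj i, a⟩ : Σ i', Fin (m i')) = ⟨χj i, b⟩ → a = b := by
        intro a _ b _ h
        simpa using h
      calc nF ^ 3 + nF + 1 ≤ m (χj i) := by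
            show nF ^ 3 + nF + 1 ≤ N + B
            omega
        _ = (Finset.univ : Finset (Fin (m (χj i)))).card := by simp
        _ ≤ _ := by
            apply Finset.card_le_card_of_injOn (fun y => (⟨χj i, y⟩ : Σ i', Fin (m i')))
            · intro y _
              exact Finset.mem_filter.mpr ⟨Finset.mem_univ _, rfl⟩
            · intro a _ b _ h
              simpa using h
    · intro i _ j' _ hadj x hx y hy hxy
      obtain ⟨s, hs, rfl⟩ := Finset.mem_image.mp hx
      obtain ⟨t, ht, rfl⟩ := Finset.mem_image.mp hy
      have hs' := (Finset.mem_filter.mp hs).2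
      have ht' := (Finset.mem_filter.mp ht).2
      have hχne : χ i ≠ χ j' := χ.valid hadj
      have hfst : s.1 ≠ t.1 := by
        rw [hs', ht']
        intro h
        exact hχne (Fin.castLE_injective hkj h)
      apply e.map_adj_iff.mpr
      show (completeMultipartiteGraph _).Adj s t
      simpa using hfst
    · intro i _ j' hj'; simp at hj'
  -- Positive: every complete (k-1)-partite graph is in the family
  have hMem : ∀ m : Fin (k - 1) → ℕ, MemFam (rainbowFreeFam F) (completeMultipartite m) :=
    fun m => mem_rainbowFree_multipartite F hncol m
  -- Assemble
  refine ⟨Or.inr ⟨k, by omega, k * B, fun n hn => ⟨fun m _ => hMem m, hTuran n hn⟩⟩,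
    ⟨?_, ⟨0, fun m _ => hMem m⟩, hMulti⟩,
    k * (B + 2), fun n hn => hTP n hn⟩
  rintro ⟨N, hN⟩
  exact hTop (max N B) (le_max_right N B) (hN (max N B) (le_max_left N B))
end
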